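/- arXiv:2111.04049 — 8 statements merged into one kernel-verified Lean document; each statement's English description precedes it below -/
import Mathlib

section
/- Let q ≥ 2 be an integer and let a, b be real formal power series such that a_N = 0 whenever N mod q < q − ⌊q/2⌋ and b_N = 0 whenever N mod q < q − ⌊q/2⌋ (in particular a_0 = b_0 = 0). Then a ∘ b = 0, where ∘ is the P_{0,q}-convolution. Equivalently, for all N, M ∈ ℕ with N mod q ≥ q − ⌊q/2⌋ and M mod q ≥ q − ⌊q/2⌋ one has w_q(N+M, M) = 0. -/
open PowerSeries Finset

/-- The `P_{0,q}` weight: `w_q(n,m) = 1` if `n % q ≥ m % q`, else `0`. -/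
noncomputable def wq (q n m : ℕ) : ℝ := if m % q ≤ n % q then 1 else 0

/-- Convolution of formal power series with respect to a weight `w`. -/
noncomputable def conv (w : ℕ → ℕ → ℝ) (a b : PowerSeries ℝ) : PowerSeries ℝ :=
  PowerSeries.mk fun n => ∑ m ∈ Finset.range (n + 1), w n m * coeff m a * coeff (n - m) b

/-- Series supported on residues `N % q ≥ q - ⌊q/2⌋` are closed zero divisors for the
`P_{0,q}`-convolution. -/
theorem stmt0 (q : ℕ) (hq : 2 ≤ q) (a b : PowerSeries ℝ)
    (ha : ∀ N : ℕ, N % q < q - q / 2 → coeff N a = 0)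
    (hb : ∀ N : ℕ, N % q < q - q / 2 → coeff N b = 0) :
    conv (wq q) a b = 0 ∧
      ∀ N M : ℕ, q - q / 2 ≤ N % q → q - q / 2 ≤ M % q → wq q (N + M) M = 0 := by
  have key : ∀ N M : ℕ, q - q / 2 ≤ N % q → q - q / 2 ≤ M % q → (N + M) % q < M % q := by
    intro N M hN hM
    have hq0 : 0 < q := by omega
    have hrN := Nat.mod_lt N hq0
    have hrM := Nat.mod_lt M hq0
    have h1 : (N + M) % q = (N % q + M % q) % q := Nat.add_mod N M q
    have h2 : q ≤ N % q + M % q := by omega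
    have h3 : (N % q + M % q) % q = N % q + M % q - q := by
      rw [Nat.mod_eq_sub_mod h2, Nat.mod_eq_of_lt (by omega)]
    omega
  have w0 : ∀ N M : ℕ, q - q / 2 ≤ N % q → q - q / 2 ≤ M % q → wq q (N + M) M = 0 := by
    intro N M hN hM
    have := key N M hN hM
    simp only [wq, if_neg (Nat.not_le.2 this)]
  refine ⟨?_, w0⟩
  ext n
  simp only [conv, coeff_mk, map_zero]
  apply Finset.sum_eq_zero
  intro m hm
  by_cases hma : m % q < q - q / 2
  · rw [ha m hma]; ring
  · by_cases hmb : (n - m) % q < q - q / 2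
    · rw [hb (n - m) hmb]; ring
    · have hmn : m ≤ n := by simpa using Nat.lt_succ_iff.mp (Finset.mem_range.mp hm)
      have : wq q n m = 0 := by
        have := w0 (n - m) m (Nat.not_lt.1 hmb) (Nat.not_lt.1 hma)
        rwa [Nat.sub_add_cancel hmn] at this
      rw [this]; ring
end

section
/- Let q ≥ 2 be an integer and let a₁, a₂, b₁, b₂ be arbitrary real formal power series. Then ([b₁]_q · a₁(x^q)) ∘ ([b₂]_q · a₂(x^q)) = [b₁·b₂]_q · (a₁·a₂)(x^q), where ∘ is the P_{0,q}-convolution, · denotes the ordinary product of formal power series, [f]_q = Σ_{n=0}^{q−1} f_n x^n is truncation below degree q, and f(x^q) denotes substitution of x^q for x. -/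
open PowerSeries Finset

/-- Truncation below degree `q`: `[f]_q = Σ_{n<q} f_n x^n`. -/
noncomputable def truncQ (q : ℕ) (f : PowerSeries ℝ) : PowerSeries ℝ :=
  PowerSeries.mk fun n => if n < q then coeff n f else 0

/-- Substitution of `x^q` for `x`. -/
noncomputable def substPow (q : ℕ) (f : PowerSeries ℝ) : PowerSeries ℝ :=
  PowerSeries.mk fun n => if q ∣ n then coeff (n / q) f else 0

lemma coeff_block (q : ℕ) (hq : 0 < q) (a b : PowerSeries ℝ) (n : ℕ) :
    coeff n (truncQ q b * substPow q a) = coeff (n % q) b * coeff (n / q) a := by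
  rw [coeff_mul, Finset.sum_eq_single (n % q, q * (n / q))]
  · simp [truncQ, substPow, Nat.mod_lt _ hq, Nat.mul_div_cancel_left _ hq]
  · rintro ⟨i, j⟩ hmem hne
    simp only [Finset.HasAntidiagonal.mem_antidiagonal] at hmem
    simp only [truncQ, substPow, coeff_mk]
    split_ifs with h1 h2
    · exfalso; apply hne
      obtain ⟨t, rfl⟩ := h2
      have hi : i % q = i := Nat.mod_eq_of_lt h1
      have hn : n % q = i := by rw [← hmem, Nat.add_mul_mod_self_left, hi]
      have hd : n / q = t := by
        rw [← hmem, Nat.add_mul_div_left _ _ hq, Nat.div_eq_of_lt h1, zero_add]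
      rw [hn, hd]
    all_goals simp
  · intro h
    exact absurd (Finset.HasAntidiagonal.mem_antidiagonal.mpr (Nat.mod_add_div n q)) h

lemma sub_mod_div (q n m : ℕ) (hq : 0 < q) (hm : m ≤ n) (h : m % q ≤ n % q) :
    (n - m) % q = n % q - m % q ∧ (n - m) / q = n / q - m / q := by
  have hd : m / q ≤ n / q := Nat.div_le_div_right hm
  have key : n - m = q * (n / q - m / q) + (n % q - m % q) := by
    rw [Nat.mul_sub]
    have h1 := Nat.div_add_mod n q
    have h2 := Nat.div_add_mod m q
    have h3 : q * (m / q) ≤ q * (n / q) := Nat.mul_le_mul_left _ hd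
    omega
  have hr : (n % q - m % q) < q := lt_of_le_of_lt (Nat.sub_le _ _) (Nat.mod_lt _ hq)
  constructor
  · rw [key, Nat.mul_add_mod, Nat.mod_eq_of_lt hr]
  · rw [key, Nat.mul_add_div hq, Nat.div_eq_of_lt hr, add_zero]

/-- Block multiplication rule:
`([b₁]_q · a₁(x^q)) ∘ ([b₂]_q · a₂(x^q)) = [b₁·b₂]_q · (a₁·a₂)(x^q)`. -/
theorem stmt1 (q : ℕ) (hq : 2 ≤ q) (a₁ a₂ b₁ b₂ : PowerSeries ℝ) :
    conv (wq q) (truncQ q b₁ * substPow q a₁) (truncQ q b₂ * substPow q a₂) =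
      truncQ q (b₁ * b₂) * substPow q (a₁ * a₂) := by
  have hq0 : 0 < q := by omega
  ext n
  rw [coeff_block q hq0, coeff_mul, coeff_mul,
    Finset.Nat.sum_antidiagonal_eq_sum_range_succ_mk,
    Finset.Nat.sum_antidiagonal_eq_sum_range_succ_mk]
  simp only [conv, coeff_mk, coeff_block q hq0, wq]
  rw [Finset.sum_mul_sum, ← Finset.sum_product']
  have step1 : ∀ m ∈ Finset.range (n + 1),
      (if m % q ≤ n % q then (1:ℝ) else 0) *
        ((coeff (m % q)) b₁ * (coeff (m / q)) a₁) *
        ((coeff ((n - m) % q)) b₂ * (coeff ((n - m) / q)) a₂) =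
      if m % q ≤ n % q then
        ((coeff (m % q)) b₁ * (coeff (m / q)) a₁) *
        ((coeff ((n - m) % q)) b₂ * (coeff ((n - m) / q)) a₂) else 0 := by
    intro m _
    split_ifs <;> simp
  rw [Finset.sum_congr rfl step1, ← Finset.sum_filter]
  refine Finset.sum_nbij' (fun m => (m % q, m / q)) (fun p => q * p.2 + p.1) ?_ ?_ ?_ ?_ ?_
  · intro m hm
    simp only [Finset.mem_filter, Finset.mem_range] at hm
    simp only [Finset.mem_product, Finset.mem_range]
    exact ⟨by omega, Nat.lt_succ_of_le (Nat.div_le_div_right (by omega))⟩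
  · rintro ⟨u, s⟩ hp
    simp only [Finset.mem_product, Finset.mem_range] at hp
    obtain ⟨hu, hs⟩ := hp
    have hu' : u ≤ n % q := by omega
    have hs' : s ≤ n / q := by omega
    have huq : u < q := lt_of_le_of_lt hu' (Nat.mod_lt _ hq0)
    have hmod : (q * s + u) % q = u := by rw [Nat.mul_add_mod, Nat.mod_eq_of_lt huq]
    have hle : q * s + u ≤ n := by
      have h1 := Nat.div_add_mod n q
      have h3 : q * s ≤ q * (n / q) := Nat.mul_le_mul_left _ hs'
      omega
    simp only [Finset.mem_filter, Finset.mem_range]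
    exact ⟨by omega, by rw [hmod]; exact hu'⟩
  · intro m _
    exact Nat.div_add_mod m q
  · rintro ⟨u, s⟩ hp
    simp only [Finset.mem_product, Finset.mem_range] at hp
    have huq : u < q := lt_of_le_of_lt (by omega : u ≤ n % q) (Nat.mod_lt _ hq0)
    have hmod : (q * s + u) % q = u := by rw [Nat.mul_add_mod, Nat.mod_eq_of_lt huq]
    have hdiv : (q * s + u) / q = s := by
      rw [add_comm, Nat.add_mul_div_left _ _ hq0, Nat.div_eq_of_lt huq, zero_add]
    simp [hmod, hdiv]
  · intro m hm
    simp only [Finset.mem_filter, Finset.mem_range] at hm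
    obtain ⟨hm1, hm2⟩ := hm
    obtain ⟨e1, e2⟩ := sub_mod_div q n m hq0 (by omega) hm2
    rw [e1, e2]
    ring
end

section
/- Let q ≥ 2 be an integer and let a, b be real formal power series with constant term 1. Then log_∘([b]_q · a(x^q)) = [log b]_q + (log a)(x^q), where log_∘ is the ∘-logarithm with respect to the P_{0,q}-convolution, log on the right-hand side is the ordinary formal power series logarithm, [f]_q = Σ_{n=0}^{q−1} f_n x^n is truncation below degree q, · is the ordinary product, and (log a)(x^q) denotes substitution of x^q into log a. -/
open PowerSeries Finset

/-- Iterated `∘`-power `f^{(k)}` with respect to a weight `w`. -/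
noncomputable def convPow (w : ℕ → ℕ → ℝ) (f : PowerSeries ℝ) : ℕ → PowerSeries ℝ
  | 0 => 1
  | k + 1 => conv w f (convPow w f k)

/-- The `∘`-logarithm `log_∘ f = Σ_{n≥1} ((−1)^{n−1}/n)·(f−1)^{(n)}`, computed coefficientwise
(the sum is finite in each coefficient since `(f−1)^{(n)}` has order `≥ n`). -/
noncomputable def convLog (w : ℕ → ℕ → ℝ) (f : PowerSeries ℝ) : PowerSeries ℝ :=
  PowerSeries.mk fun N =>
    ∑ n ∈ Finset.Icc 1 N, ((-1 : ℝ) ^ (n - 1) / n) * coeff N (convPow w (f - 1) n)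

/-- The ordinary formal power series logarithm
`log f = Σ_{n≥1} ((−1)^{n−1}/n)·(f−1)^n`, computed coefficientwise. -/
noncomputable def logSeries (f : PowerSeries ℝ) : PowerSeries ℝ :=
  PowerSeries.mk fun N =>
    ∑ n ∈ Finset.Icc 1 N, ((-1 : ℝ) ^ (n - 1) / n) * coeff N ((f - 1) ^ n)

set_option linter.unusedSectionVars false
set_option linter.unusedTactic false

/-! ### Modular arithmetic helpers -/

lemma aux_mod_key {q : ℕ} (hq : 0 < q) (a b : ℕ) :
    a % q ≤ (a + b) % q ↔ a % q + b % q < q := by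
  have h := Nat.add_mod a b q
  have ha := Nat.mod_lt a hq
  have hb := Nat.mod_lt b hq
  rcases lt_or_ge (a % q + b % q) q with h1 | h1
  · rw [h, Nat.mod_eq_of_lt h1]; omega
  · have h2 : (a % q + b % q) % q = a % q + b % q - q := by
      rw [Nat.mod_eq_sub_mod h1, Nat.mod_eq_of_lt (by omega)]
    rw [h, h2]; omega

lemma aux_mod_add {q a b : ℕ} (h : a % q + b % q < q) :
    (a + b) % q = a % q + b % q := by
  rw [Nat.add_mod, Nat.mod_eq_of_lt h]

/-! ### Basic conv lemmas -/

lemma coeff_conv (w : ℕ → ℕ → ℝ) (a b : PowerSeries ℝ) (n : ℕ) :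
    coeff n (conv w a b) =
      ∑ m ∈ Finset.range (n + 1), w n m * coeff m a * coeff (n - m) b := by
  simp [conv]

lemma conv_add_left (w) (u v t : PowerSeries ℝ) :
    conv w (u + v) t = conv w u t + conv w v t := by
  ext n; simp [coeff_conv, ← Finset.sum_add_distrib]; apply Finset.sum_congr rfl; intros; ring

lemma conv_add_right (w) (u v t : PowerSeries ℝ) :
    conv w u (v + t) = conv w u v + conv w u t := by
  ext n; simp [coeff_conv, ← Finset.sum_add_distrib]; apply Finset.sum_congr rfl; intros; ring

lemma conv_smul_left (w) (c : ℝ) (u t : PowerSeries ℝ) :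
    conv w (c • u) t = c • conv w u t := by
  ext n; simp [coeff_conv, Finset.mul_sum]; apply Finset.sum_congr rfl; intros; ring

lemma conv_smul_right (w) (c : ℝ) (u t : PowerSeries ℝ) :
    conv w u (c • t) = c • conv w u t := by
  ext n; simp [coeff_conv, Finset.mul_sum]; apply Finset.sum_congr rfl; intros; ring

lemma conv_sub_left (w) (u v t : PowerSeries ℝ) :
    conv w (u - v) t = conv w u t - conv w v t := by
  ext n; simp [coeff_conv, ← Finset.sum_sub_distrib]; apply Finset.sum_congr rfl; intros; ring

lemma conv_sub_right (w) (u v t : PowerSeries ℝ) :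
    conv w u (v - t) = conv w u v - conv w u t := by
  ext n; simp [coeff_conv, ← Finset.sum_sub_distrib]; apply Finset.sum_congr rfl; intros; ring

lemma conv_sum_left (w) {ι : Type*} (s : Finset ι) (F : ι → PowerSeries ℝ) (t : PowerSeries ℝ) :
    conv w (∑ i ∈ s, F i) t = ∑ i ∈ s, conv w (F i) t := by
  classical
  induction s using Finset.induction with
  | empty => ext n; simp [coeff_conv]
  | insert _ _ h ih => rw [Finset.sum_insert h, conv_add_left, ih, Finset.sum_insert h]

lemma conv_sum_right (w) {ι : Type*} (s : Finset ι) (F : ι → PowerSeries ℝ) (t : PowerSeries ℝ) :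
    conv w t (∑ i ∈ s, F i) = ∑ i ∈ s, conv w t (F i) := by
  classical
  induction s using Finset.induction with
  | empty => ext n; simp [coeff_conv]
  | insert _ _ h ih => rw [Finset.sum_insert h, conv_add_right, ih, Finset.sum_insert h]

lemma conv_one_left (w) (hw0 : ∀ n, w n 0 = 1) (v : PowerSeries ℝ) : conv w 1 v = v := by
  ext n
  rw [coeff_conv, Finset.sum_eq_single 0]
  · simp [hw0]
  · intro m hm hm0; simp [PowerSeries.coeff_one, hm0]
  · intro h; simp at h

lemma conv_comm_of (w) (hw : ∀ m n : ℕ, m ≤ n → w n m = w n (n - m))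
    (u v : PowerSeries ℝ) : conv w u v = conv w v u := by
  ext n
  rw [coeff_conv, coeff_conv, ← Finset.sum_range_reflect]
  apply Finset.sum_congr rfl
  intro m hm
  rw [Finset.mem_range] at hm
  have h1 : n + 1 - 1 - m = n - m := by omega
  have h2 : n - (n - m) = m := by omega
  rw [h1, h2, ← hw m n (by omega)]
  ring

lemma conv_assoc_of (w) (hw : ∀ i j k : ℕ, w (i+j+k) (i+j) * w (i+j) i = w (i+j+k) i * w (j+k) j)
    (u v t : PowerSeries ℝ) : conv w (conv w u v) t = conv w u (conv w v t) := by
  ext n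
  rw [coeff_conv, coeff_conv]
  have L : ∀ m ∈ Finset.range (n+1), w n m * coeff m (conv w u v) * coeff (n - m) t
      = ∑ i ∈ Finset.range (m+1), w n m * w m i * coeff i u * coeff (m - i) v * coeff (n - m) t := by
    intro m hm
    rw [coeff_conv, Finset.mul_sum, Finset.sum_mul]
    apply Finset.sum_congr rfl; intros; ring
  have R : ∀ i ∈ Finset.range (n+1), w n i * coeff i u * coeff (n - i) (conv w v t)
      = ∑ j ∈ Finset.range (n - i + 1), w n i * w (n-i) j * coeff i u * coeff j v * coeff (n - i - j) t := by
    intro i hi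
    rw [coeff_conv, Finset.mul_sum]
    apply Finset.sum_congr rfl; intros; ring
  rw [Finset.sum_congr rfl L, Finset.sum_congr rfl R, Finset.sum_sigma', Finset.sum_sigma']
  apply Finset.sum_nbij' (i := fun p => (⟨p.2, p.1 - p.2⟩ : Σ _ : ℕ, ℕ))
    (j := fun p => (⟨p.1 + p.2, p.1⟩ : Σ _ : ℕ, ℕ))
  · rintro ⟨m, i⟩ hp; simp only [Finset.mem_sigma, Finset.mem_range] at hp ⊢; omega
  · rintro ⟨i, j⟩ hp; simp only [Finset.mem_sigma, Finset.mem_range] at hp ⊢; omega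
  · rintro ⟨m, i⟩ hp; simp only [Finset.mem_sigma, Finset.mem_range] at hp
    rw [show i + (m - i) = m by omega]
  · rintro ⟨i, j⟩ hp; simp only [Finset.mem_sigma, Finset.mem_range] at hp
    rw [show i + j - i = j by omega]
  · rintro ⟨m, i⟩ hp
    simp only [Finset.mem_sigma, Finset.mem_range] at hp
    have key := hw i (m - i) (n - m)
    have e1 : i + (m - i) = m := by omega
    have e2 : m + (n - m) = n := by omega
    have e4 : m - i + (n - m) = n - i := by omega
    have e5 : n - i - (m - i) = n - m := by omega
    rw [e1, e2, e4] at key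
    rw [e5, ← key]

/-! ### The Euler operator -/

noncomputable def Eop (f : PowerSeries ℝ) : PowerSeries ℝ :=
  PowerSeries.mk fun n => n * coeff n f

lemma coeff_Eop (f : PowerSeries ℝ) (n : ℕ) : coeff n (Eop f) = n * coeff n f := by
  simp [Eop]

lemma Eop_add (u v : PowerSeries ℝ) : Eop (u + v) = Eop u + Eop v := by
  ext n; simp [coeff_Eop]; ring

lemma Eop_sub (u v : PowerSeries ℝ) : Eop (u - v) = Eop u - Eop v := by
  ext n; simp [coeff_Eop]; ring

lemma Eop_smul (c : ℝ) (u : PowerSeries ℝ) : Eop (c • u) = c • Eop u := by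
  ext n; simp [coeff_Eop]; ring

lemma Eop_one : Eop (1 : PowerSeries ℝ) = 0 := by
  ext n; simp [coeff_Eop, PowerSeries.coeff_one]

lemma Eop_sum {ι : Type*} (s : Finset ι) (F : ι → PowerSeries ℝ) :
    Eop (∑ i ∈ s, F i) = ∑ i ∈ s, Eop (F i) := by
  classical
  induction s using Finset.induction with
  | empty => ext n; simp [coeff_Eop]
  | insert _ _ h ih => rw [Finset.sum_insert h, Eop_add, ih, Finset.sum_insert h]

lemma Eop_conv (w) (u v : PowerSeries ℝ) :
    Eop (conv w u v) = conv w (Eop u) v + conv w u (Eop v) := by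
  ext n
  rw [coeff_Eop, coeff_conv, map_add (coeff n), coeff_conv, coeff_conv, Finset.mul_sum,
    ← Finset.sum_add_distrib]
  apply Finset.sum_congr rfl
  intro m hm
  rw [Finset.mem_range] at hm
  rw [coeff_Eop, coeff_Eop]
  have : ((n - m : ℕ) : ℝ) = (n : ℝ) - (m : ℝ) := by
    rw [Nat.cast_sub (by omega)]
  rw [this]; ring

/-! ### Order lemmas -/

lemma coeff_conv_zero (w) {u v : PowerSeries ℝ} {α β : ℕ}
    (hu : ∀ j < α, coeff j u = 0) (hv : ∀ j < β, coeff j v = 0)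
    {n : ℕ} (hn : n < α + β) : coeff n (conv w u v) = 0 := by
  rw [coeff_conv]
  apply Finset.sum_eq_zero
  intro m hm
  rw [Finset.mem_range] at hm
  by_cases h : m < α
  · rw [hu m h]; ring
  · rw [hv (n - m) (by omega)]; ring

lemma coeff_convPow_zero (w) {g : PowerSeries ℝ} (hg : constantCoeff g = 0) :
    ∀ k N, N < k → coeff N (convPow w g k) = 0 := by
  intro k
  induction k with
  | zero => intro N h; omega
  | succ k ih =>
      intro N h
      show coeff N (conv w g (convPow w g k)) = 0
      apply coeff_conv_zero w (α := 1) (β := k)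
      · intro j hj
        interval_cases j
        rw [PowerSeries.coeff_zero_eq_constantCoeff]; exact hg
      · exact fun j hj => ih j hj
      · omega

lemma coeff_conv_congr (w) {u v v' : PowerSeries ℝ} {N : ℕ}
    (h : ∀ j ≤ N, coeff j v = coeff j v') :
    coeff N (conv w u v) = coeff N (conv w u v') := by
  rw [coeff_conv, coeff_conv]
  apply Finset.sum_congr rfl
  intro m hm
  rw [Finset.mem_range] at hm
  rw [h (N - m) (by omega)]

/-! ### Power rule and telescoping -/

section master
variable (w : ℕ → ℕ → ℝ) (hw0 : ∀ n, w n 0 = 1)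
  (hcomm : ∀ u v, conv w u v = conv w v u)
  (hassoc : ∀ u v t, conv w (conv w u v) t = conv w u (conv w v t))

include hw0 hcomm hassoc in
lemma Eop_convPow (g : PowerSeries ℝ) :
    ∀ k, Eop (convPow w g (k+1)) = ((k : ℝ) + 1) • conv w (convPow w g k) (Eop g) := by
  intro k
  induction k with
  | zero =>
      show Eop (conv w g 1) = (((0:ℕ) : ℝ) + 1) • conv w 1 (Eop g)
      rw [hcomm g 1, conv_one_left w hw0, conv_one_left w hw0]
      norm_num
  | succ k ih =>
      show Eop (conv w g (convPow w g (k+1))) = _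
      rw [Eop_conv, ih, conv_smul_right, ← hassoc]
      have : conv w g (convPow w g k) = convPow w g (k+1) := rfl
      rw [this, hcomm (Eop g) (convPow w g (k+1))]
      push_cast
      module

include hw0 in
lemma conv_telescope (t : PowerSeries ℝ) (M : ℕ) :
    ∑ n ∈ Finset.Icc 1 M, ((-1 : ℝ))^(n-1) • (convPow w t (n-1) + convPow w t n)
      = 1 - ((-1 : ℝ))^M • convPow w t M := by
  induction M with
  | zero =>
      show (∑ n ∈ Finset.Icc 1 0, _) = 1 - (1 : ℝ) • convPow w t 0
      rw [show Finset.Icc 1 0 = (∅ : Finset ℕ) by rfl]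
      show (0 : PowerSeries ℝ) = 1 - (1:ℝ) • (1 : PowerSeries ℝ)
      simp
  | succ M ih =>
      rw [Finset.sum_Icc_succ_top (by omega), ih]
      simp only [Nat.add_sub_cancel]
      rw [pow_succ, smul_add]
      rw [show ((-1:ℝ))^M * -1 = -((-1:ℝ))^M by ring]
      rw [neg_smul]
      abel

include hw0 hcomm hassoc in
lemma conv_chain_rule (f : PowerSeries ℝ) (hf : constantCoeff f = 1) :
    conv w f (Eop (convLog w f)) = Eop f := by
  have ht0 : constantCoeff (f - 1) = 0 := by simp [hf]
  ext N
  set M := N + 1 with hM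
  set SM : PowerSeries ℝ := ∑ n ∈ Finset.Icc 1 M, ((-1:ℝ)^(n-1)/n) • convPow w (f-1) n with hSM
  have C1 : ∀ j ≤ M, coeff j (convLog w f) = coeff j SM := by
    intro j hj
    rw [hSM, map_sum]
    simp only [map_smul, smul_eq_mul]
    rw [convLog, coeff_mk]
    apply Finset.sum_subset (Finset.Icc_subset_Icc_right hj)
    intro n hn hnj
    rw [Finset.mem_Icc] at hn hnj
    rw [coeff_convPow_zero w ht0 n j (by omega)]
    ring
  have S1 : coeff N (conv w f (Eop (convLog w f))) = coeff N (conv w f (Eop SM)) := by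
    apply coeff_conv_congr
    intro j hj
    rw [coeff_Eop, coeff_Eop, C1 j (by omega)]
  have S2 : Eop SM = ∑ n ∈ Finset.Icc 1 M, ((-1:ℝ))^(n-1) • conv w (convPow w (f-1) (n-1)) (Eop f) := by
    rw [hSM, Eop_sum]
    apply Finset.sum_congr rfl
    intro n hn
    rw [Finset.mem_Icc] at hn
    obtain ⟨m, rfl⟩ : ∃ m, n = m + 1 := ⟨n - 1, by omega⟩
    rw [Eop_smul, Eop_convPow w hw0 hcomm hassoc (f-1) m, smul_smul]
    have hE : Eop (f - 1) = Eop f := by rw [Eop_sub, Eop_one, sub_zero]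
    rw [hE]
    congr 1
    simp only [Nat.add_sub_cancel]
    have : ((m+1 : ℕ) : ℝ) ≠ 0 := by positivity
    push_cast
    field_simp
  have S3 : conv w f (Eop SM) = Eop f - ((-1:ℝ))^M • conv w (convPow w (f-1) M) (Eop f) := by
    rw [S2, conv_sum_right]
    have step : ∀ n ∈ Finset.Icc 1 M,
        conv w f (((-1:ℝ))^(n-1) • conv w (convPow w (f-1) (n-1)) (Eop f))
          = conv w (((-1:ℝ))^(n-1) • (convPow w (f-1) (n-1) + convPow w (f-1) n)) (Eop f) := by
      intro n hn
      rw [Finset.mem_Icc] at hn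
      rw [conv_smul_right, ← hassoc, conv_smul_left]
      congr 2
      have expand : conv w f (convPow w (f-1) (n-1)) =
          conv w 1 (convPow w (f-1) (n-1)) + conv w (f-1) (convPow w (f-1) (n-1)) := by
        rw [← conv_add_left]; congr 1; ring
      rw [expand, conv_one_left w hw0]
      congr 1
      obtain ⟨m, rfl⟩ : ∃ m, n = m + 1 := ⟨n - 1, by omega⟩
      simp only [Nat.add_sub_cancel]
      rfl
    rw [Finset.sum_congr rfl step, ← conv_sum_left, conv_telescope w hw0, conv_sub_left,
      conv_one_left w hw0, conv_smul_left]
  rw [S1, S3, map_sub, map_smul]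
  have hz : coeff N (conv w (convPow w (f-1) M) (Eop f)) = 0 := by
    apply coeff_conv_zero w (α := M) (β := 0)
    · exact fun j hj => coeff_convPow_zero w ht0 M j hj
    · intro j hj; omega
    · omega
  rw [hz]
  simp

end master

/-! ### Cancellation and injectivity -/

lemma conv_eq_zero (w) (hw0 : ∀ n, w n 0 = 1) {f d : PowerSeries ℝ}
    (hf : constantCoeff f = 1) (h : conv w f d = 0) : d = 0 := by
  ext n
  induction n using Nat.strong_induction_on with
  | _ n ih =>
    have h0 : coeff n (conv w f d) = 0 := by rw [h]; simp
    rw [coeff_conv, Finset.sum_eq_single 0] at h0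
    · rw [hw0, PowerSeries.coeff_zero_eq_constantCoeff, hf] at h0
      simpa using h0
    · intro m hm hm0
      rw [Finset.mem_range] at hm
      have : coeff (n - m) d = 0 := by
        have := ih (n - m) (by omega)
        simpa using this
      rw [this]; ring
    · intro hc; simp at hc
  -- leftover: coeff n 0 = 0 handled? goal is coeff n d = coeff n 0

lemma conv_cancel (w) (hw0 : ∀ n, w n 0 = 1) {f u v : PowerSeries ℝ}
    (hf : constantCoeff f = 1) (h : conv w f u = conv w f v) : u = v := by
  have : conv w f (u - v) = 0 := by rw [conv_sub_right, h, sub_self]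
  have := conv_eq_zero w hw0 hf this
  exact sub_eq_zero.mp this

lemma Eop_inj {u v : PowerSeries ℝ} (h : Eop u = Eop v)
    (h0 : coeff 0 u = coeff 0 v) : u = v := by
  ext n
  cases n with
  | zero => exact h0
  | succ n =>
      have := congrArg (coeff (n+1)) h
      rw [coeff_Eop, coeff_Eop] at this
      have hne : ((n+1 : ℕ) : ℝ) ≠ 0 := by positivity
      exact mul_left_cancel₀ hne this

/-! ### The trivial weight: ordinary multiplication -/

lemma conv_one_eq_mul (u v : PowerSeries ℝ) : conv (fun _ _ => (1:ℝ)) u v = u * v := by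
  ext n
  rw [coeff_conv, PowerSeries.coeff_mul, Finset.Nat.sum_antidiagonal_eq_sum_range_succ_mk]
  simp

lemma convPow_one_eq_pow (g : PowerSeries ℝ) (k : ℕ) :
    convPow (fun _ _ => (1:ℝ)) g k = g ^ k := by
  induction k with
  | zero => rfl
  | succ k ih =>
      show conv _ g (convPow _ g k) = _
      rw [ih, conv_one_eq_mul, pow_succ]
      ring

lemma logSeries_eq_convLog (f : PowerSeries ℝ) :
    logSeries f = convLog (fun _ _ => (1:ℝ)) f := by
  unfold logSeries convLog
  simp [convPow_one_eq_pow]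

lemma chain_rule_mul (b : PowerSeries ℝ) (hb : constantCoeff b = 1) :
    b * Eop (logSeries b) = Eop b := by
  rw [logSeries_eq_convLog, ← conv_one_eq_mul]
  exact conv_chain_rule (fun _ _ => (1:ℝ)) (fun _ => rfl)
    (fun u v => by rw [conv_one_eq_mul, conv_one_eq_mul, mul_comm])
    (fun u v t => by simp only [conv_one_eq_mul, mul_assoc]) b hb

/-! ### Properties of the weight wq -/

lemma aux_ite_mul (P Q : Prop) [Decidable P] [Decidable Q] :
    (if P then (1:ℝ) else 0) * (if Q then (1:ℝ) else 0) = if P ∧ Q then (1:ℝ) else 0 := by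
  by_cases hP : P <;> by_cases hQ : Q <;> simp [hP, hQ]

lemma wq_zero (q : ℕ) (n : ℕ) : wq q n 0 = 1 := by
  simp [wq, Nat.zero_mod]

lemma wq_comm_cond {q : ℕ} (hq : 0 < q) : ∀ m n : ℕ, m ≤ n → wq q n m = wq q n (n - m) := by
  intro m n hmn
  unfold wq
  obtain ⟨b, rfl⟩ : ∃ b, n = m + b := ⟨n - m, by omega⟩
  have e : m + b - m = b := by omega
  rw [e]
  apply if_congr _ rfl rfl
  rw [aux_mod_key hq m b, show m + b = b + m by omega, aux_mod_key hq b m]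
  omega

lemma wq_assoc_cond {q : ℕ} (hq : 0 < q) :
    ∀ i j k : ℕ, wq q (i+j+k) (i+j) * wq q (i+j) i = wq q (i+j+k) i * wq q (j+k) j := by
  intro i j k
  unfold wq
  rw [aux_ite_mul, aux_ite_mul]
  apply if_congr _ rfl rfl
  have A1 := aux_mod_key hq (i+j) k
  have A2 := aux_mod_key hq i j
  have R1 : i % q ≤ (i+j+k) % q ↔ i % q + (j+k) % q < q := by
    rw [Nat.add_assoc]; exact aux_mod_key hq i (j+k)
  have R2 := aux_mod_key hq j k
  constructor
  · rintro ⟨h1, h2⟩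
    rw [A1] at h1
    rw [A2] at h2
    rw [aux_mod_add h2] at h1
    have hjk : j % q + k % q < q := by omega
    exact ⟨by rw [R1, aux_mod_add hjk]; omega, by rw [R2]; exact hjk⟩
  · rintro ⟨h1, h2⟩
    rw [R1] at h1
    rw [R2] at h2
    rw [aux_mod_add h2] at h1
    have hij : i % q + j % q < q := by omega
    exact ⟨by rw [A1, aux_mod_add hij]; omega, by rw [A2]; omega⟩

lemma conv_wq_comm {q : ℕ} (hq : 0 < q) (u v : PowerSeries ℝ) :
    conv (wq q) u v = conv (wq q) v u :=
  conv_comm_of _ (wq_comm_cond hq) u v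

lemma conv_wq_assoc {q : ℕ} (hq : 0 < q) (u v t : PowerSeries ℝ) :
    conv (wq q) (conv (wq q) u v) t = conv (wq q) u (conv (wq q) v t) :=
  conv_assoc_of _ (wq_assoc_cond hq) u v t

/-! ### truncQ and substPow -/

lemma coeff_truncQ (q : ℕ) (f : PowerSeries ℝ) (n : ℕ) :
    coeff n (truncQ q f) = if n < q then coeff n f else 0 := by simp [truncQ]

lemma coeff_substPow (q : ℕ) (f : PowerSeries ℝ) (n : ℕ) :
    coeff n (substPow q f) = if q ∣ n then coeff (n / q) f else 0 := by simp [substPow]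

lemma coeff_mul_range (u v : PowerSeries ℝ) (n : ℕ) :
    coeff n (u * v) = ∑ m ∈ Finset.range (n + 1), coeff m u * coeff (n - m) v := by
  rw [PowerSeries.coeff_mul, Finset.Nat.sum_antidiagonal_eq_sum_range_succ_mk]

lemma Eop_truncQ (q : ℕ) (g : PowerSeries ℝ) : Eop (truncQ q g) = truncQ q (Eop g) := by
  ext n
  rw [coeff_Eop, coeff_truncQ, coeff_truncQ, coeff_Eop]
  by_cases h : n < q <;> simp [h]

lemma Eop_substPow (q : ℕ) (hq : 0 < q) (g : PowerSeries ℝ) :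
    Eop (substPow q g) = (q : ℝ) • substPow q (Eop g) := by
  ext n
  rw [coeff_Eop, coeff_substPow, map_smul, coeff_substPow]
  by_cases h : q ∣ n
  · simp only [h, if_true, coeff_Eop, smul_eq_mul]
    have : q * (n / q) = n := Nat.mul_div_cancel' h
    have hc : ((n : ℕ) : ℝ) = (q : ℝ) * ((n / q : ℕ) : ℝ) := by
      rw [← Nat.cast_mul, this]
    rw [hc]; ring
  · simp [h]

lemma truncQ_conv (q : ℕ) (hq : 0 < q) (u v : PowerSeries ℝ) :
    conv (wq q) (truncQ q u) (truncQ q v) = truncQ q (u * v) := by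
  ext n
  rw [coeff_conv, coeff_truncQ]
  by_cases hn : n < q
  · rw [if_pos hn, coeff_mul_range]
    apply Finset.sum_congr rfl
    intro m hm
    rw [Finset.mem_range] at hm
    have hm1 : m < q := by omega
    have hm2 : n - m < q := by omega
    rw [coeff_truncQ, coeff_truncQ, if_pos hm1, if_pos hm2]
    have hw : wq q n m = 1 := by
      unfold wq
      rw [Nat.mod_eq_of_lt hm1, Nat.mod_eq_of_lt hn, if_pos (by omega)]
    rw [hw, one_mul]
  · rw [if_neg hn]
    apply Finset.sum_eq_zero
    intro m hm
    rw [Finset.mem_range] at hm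
    rw [coeff_truncQ, coeff_truncQ]
    by_cases hm1 : m < q
    · by_cases hm2 : n - m < q
      · have hw : wq q n m = 0 := by
          unfold wq
          have hn2 : n < 2 * q := by omega
          have hnq : n % q = n - q := by
            rw [Nat.mod_eq_sub_mod (by omega), Nat.mod_eq_of_lt (by omega)]
          rw [Nat.mod_eq_of_lt hm1, hnq, if_neg (by omega)]
        rw [hw]; ring
      · rw [if_neg hm2]; ring
    · rw [if_neg hm1]; ring

lemma substPow_conv (q : ℕ) (hq : 0 < q) (u v : PowerSeries ℝ) :
    conv (wq q) (substPow q u) (substPow q v) = substPow q (u * v) := by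
  ext n
  rw [coeff_conv, coeff_substPow]
  by_cases hn : q ∣ n
  · rw [if_pos hn, coeff_mul_range]
    obtain ⟨c, rfl⟩ := hn
    rw [Nat.mul_div_cancel_left c (by omega)]
    rw [← Finset.sum_filter_of_ne (p := fun m => q ∣ m)
      (fun m hm hne => by
        by_contra hnd
        rw [coeff_substPow, if_neg hnd] at hne
        simp at hne)]
    apply Finset.sum_nbij' (i := fun m => m / q) (j := fun j => q * j)
    · intro m hm
      simp only [Finset.mem_filter, Finset.mem_range] at hm ⊢
      obtain ⟨hm1, hm2⟩ := hm
      obtain ⟨d, rfl⟩ := hm2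
      rw [Nat.mul_div_cancel_left d (by omega)]
      have hd : d ≤ c := by
        by_contra hdc
        push_neg at hdc
        have : q * c < q * d := (Nat.mul_lt_mul_left hq).mpr hdc
        omega
      omega
    · intro j hj
      simp only [Finset.mem_filter, Finset.mem_range] at hj ⊢
      constructor
      · have : q * j ≤ q * c := Nat.mul_le_mul_left q (by omega)
        omega
      · exact dvd_mul_right q j
    · intro m hm
      simp only [Finset.mem_filter, Finset.mem_range] at hm
      exact Nat.mul_div_cancel' hm.2
    · intro j hj
      exact Nat.mul_div_cancel_left j (by omega)
    · intro m hm
      simp only [Finset.mem_filter, Finset.mem_range] at hm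
      obtain ⟨hm1, d, rfl⟩ := hm
      have hd : d ≤ c := by
        by_contra hdc
        push_neg at hdc
        have : q * c < q * d := (Nat.mul_lt_mul_left hq).mpr hdc
        omega
      have h8 : q * (c - d) + q * d = q * c := by
        rw [← Nat.mul_add]; congr 1; omega
      have hw : wq q (q * c) (q * d) = 1 := by
        unfold wq
        rw [Nat.mul_mod_right, Nat.mul_mod_right]
        simp
      have hdvd : q ∣ q * c - q * d := Nat.dvd_sub (dvd_mul_right q c) (dvd_mul_right q d)
      have h9 : (q * c - q * d) / q = c - d := by
        rw [show q * c - q * d = q * (c - d) by omega, Nat.mul_div_cancel_left _ (by omega)]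
      rw [hw, one_mul, coeff_substPow, coeff_substPow,
        if_pos (dvd_mul_right q d), if_pos hdvd, h9,
        Nat.mul_div_cancel_left d (by omega)]
  · rw [if_neg hn]
    apply Finset.sum_eq_zero
    intro m hm
    rw [Finset.mem_range] at hm
    rw [coeff_substPow, coeff_substPow]
    by_cases h1 : q ∣ m
    · have h2 : ¬ q ∣ n - m := by
        intro h2
        exact hn (by
          have := Nat.dvd_add h1 h2
          rwa [show m + (n - m) = n by omega] at this)
      rw [if_neg h2]; ring
    · rw [if_neg h1]; ring

/-! ### The mixed product -/

lemma coeff_TS_mul (q : ℕ) (hq : 0 < q) (u v : PowerSeries ℝ) (n : ℕ) :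
    coeff n (truncQ q u * substPow q v) = coeff (n % q) u * coeff (n / q) v := by
  rw [coeff_mul_range, Finset.sum_eq_single (n % q)]
  · have h1 : n % q < q := Nat.mod_lt n hq
    have key : n - n % q = q * (n / q) := by
      have h := Nat.div_add_mod n q
      omega
    rw [coeff_truncQ, if_pos h1, coeff_substPow, key, if_pos (dvd_mul_right q (n/q)),
      Nat.mul_div_cancel_left _ (by omega)]
  · intro m hm hne
    rw [Finset.mem_range] at hm
    rw [coeff_truncQ, coeff_substPow]
    by_cases h1 : m < q
    · by_cases h2 : q ∣ n - m
      · exfalso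
        obtain ⟨s, hs⟩ := h2
        have hn : n = m + q * s := by omega
        apply hne
        rw [hn, Nat.add_mul_mod_self_left, Nat.mod_eq_of_lt h1]
      · rw [if_neg h2]; ring
    · rw [if_neg h1]; ring
  · intro h
    exfalso; apply h
    rw [Finset.mem_range]
    have := Nat.mod_le n q
    omega

lemma coeff_TS_conv (q : ℕ) (hq : 0 < q) (u v : PowerSeries ℝ) (n : ℕ) :
    coeff n (conv (wq q) (truncQ q u) (substPow q v))
      = coeff (n % q) u * coeff (n / q) v := by
  rw [coeff_conv, Finset.sum_eq_single (n % q)]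
  · have h1 : n % q < q := Nat.mod_lt n hq
    have key : n - n % q = q * (n / q) := by
      have h := Nat.div_add_mod n q
      omega
    have hw : wq q n (n % q) = 1 := by
      unfold wq
      rw [Nat.mod_mod_of_dvd n dvd_rfl, if_pos le_rfl]
    rw [hw, one_mul, coeff_truncQ, if_pos h1, coeff_substPow, key,
      if_pos (dvd_mul_right q (n/q)), Nat.mul_div_cancel_left _ (by omega)]
  · intro m hm hne
    rw [Finset.mem_range] at hm
    rw [coeff_truncQ, coeff_substPow]
    by_cases h1 : m < q
    · by_cases h2 : q ∣ n - m
      · exfalso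
        obtain ⟨s, hs⟩ := h2
        have hn : n = m + q * s := by omega
        apply hne
        rw [hn, Nat.add_mul_mod_self_left, Nat.mod_eq_of_lt h1]
      · rw [if_neg h2]; ring
    · rw [if_neg h1]; ring
  · intro h
    exfalso; apply h
    rw [Finset.mem_range]
    have := Nat.mod_le n q
    omega

lemma TS_conv_eq_mul (q : ℕ) (hq : 0 < q) (u v : PowerSeries ℝ) :
    conv (wq q) (truncQ q u) (substPow q v) = truncQ q u * substPow q v := by
  ext n
  rw [coeff_TS_conv q hq, coeff_TS_mul q hq]

/-- `log_∘([b]_q · a(x^q)) = [log b]_q + (log a)(x^q)` for the `P_{0,q}`-convolution. -/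
theorem stmt2 (q : ℕ) (hq : 2 ≤ q) (a b : PowerSeries ℝ)
    (ha : constantCoeff a = 1) (hb : constantCoeff b = 1) :
    convLog (wq q) (truncQ q b * substPow q a) =
      truncQ q (logSeries b) + substPow q (logSeries a) := by
  have hq0 : 0 < q := by omega
  set f := truncQ q b * substPow q a with hfdef
  have hfc : f = conv (wq q) (truncQ q b) (substPow q a) := (TS_conv_eq_mul q hq0 b a).symm
  have hf : constantCoeff f = 1 := by
    have h0 := coeff_TS_mul q hq0 b a 0
    rw [Nat.zero_mod, Nat.zero_div] at h0
    rw [← PowerSeries.coeff_zero_eq_constantCoeff, hfdef, h0,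
      PowerSeries.coeff_zero_eq_constantCoeff, hb, ha, one_mul]
  have hLHS : conv (wq q) f (Eop (convLog (wq q) f)) = Eop f :=
    conv_chain_rule (wq q) (wq_zero q) (conv_wq_comm hq0) (conv_wq_assoc hq0) f hf
  have hTB : conv (wq q) (truncQ q b) (Eop (truncQ q (logSeries b)))
      = Eop (truncQ q b) := by
    rw [Eop_truncQ, truncQ_conv q hq0, chain_rule_mul b hb, ← Eop_truncQ]
  have hSA : conv (wq q) (substPow q a) (Eop (substPow q (logSeries a)))
      = Eop (substPow q a) := by
    rw [Eop_substPow q hq0, conv_smul_right, substPow_conv q hq0, chain_rule_mul a ha,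
      ← Eop_substPow q hq0]
  have hRHS : conv (wq q) f
      (Eop (truncQ q (logSeries b) + substPow q (logSeries a))) = Eop f := by
    rw [Eop_add, conv_add_right]
    have t1 : conv (wq q) f (Eop (truncQ q (logSeries b)))
        = conv (wq q) (substPow q a) (Eop (truncQ q b)) := by
      rw [hfc, conv_wq_comm hq0 (truncQ q b) (substPow q a), conv_wq_assoc hq0, hTB]
    have t2 : conv (wq q) f (Eop (substPow q (logSeries a)))
        = conv (wq q) (truncQ q b) (Eop (substPow q a)) := by
      rw [hfc, conv_wq_assoc hq0, hSA]
    rw [t1, t2, hfc, Eop_conv, conv_wq_comm hq0 (substPow q a) (Eop (truncQ q b))]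
  have hE : Eop (convLog (wq q) f)
      = Eop (truncQ q (logSeries b) + substPow q (logSeries a)) :=
    conv_cancel (wq q) (wq_zero q) hf (hLHS.trans hRHS.symm)
  apply Eop_inj hE
  have hIcc : Finset.Icc 1 0 = (∅ : Finset ℕ) := Finset.Icc_eq_empty (by omega)
  have c0 : coeff 0 (convLog (wq q) f) = 0 := by
    rw [convLog, coeff_mk, hIcc, Finset.sum_empty]
  have c1 : coeff 0 (logSeries b) = 0 := by
    rw [logSeries, coeff_mk, hIcc, Finset.sum_empty]
  have c2 : coeff 0 (logSeries a) = 0 := by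
    rw [logSeries, coeff_mk, hIcc, Finset.sum_empty]
  rw [c0, map_add, coeff_truncQ, coeff_substPow]
  rw [if_pos hq0, if_pos (dvd_zero q), Nat.zero_div, c1, c2, add_zero]
end

section
/- For all n, m ∈ ℕ and i, j ∈ {0,1}, the coefficient of x^{2n+i} in the formal power series x^{2m+j} · Π_{r=0}^{2m+j} (1 − (−1)^r x)^{−1} equals the binomial coefficient C(n,m) if i ≥ j, and equals 0 if i < j. -/
open PowerSeries Finset

noncomputable def Tser (m j : ℕ) : PowerSeries ℝ :=
  PowerSeries.mk fun N => if j ≤ N % 2 then ((N / 2).choose m : ℝ) else 0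

lemma Tstep (m j : ℕ) : Tser (m + 1) j * (1 - X ^ 2) = Tser m j * X ^ 2 := by
  ext N
  rw [mul_sub, mul_one, map_sub, coeff_mul_X_pow', coeff_mul_X_pow']
  simp only [Tser, coeff_mk]
  by_cases h2 : 2 ≤ N
  · rw [if_pos h2, if_pos h2]
    have h3 : (N - 2) % 2 = N % 2 := by omega
    have h4 : (N - 2) / 2 = N / 2 - 1 := by omega
    rw [h3, h4]
    split_ifs with hj
    · obtain ⟨k, hk⟩ : ∃ k, N / 2 = k + 1 := ⟨N / 2 - 1, by omega⟩
      rw [hk]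
      simp only [Nat.add_sub_cancel, Nat.choose_succ_succ]
      push_cast; ring
    · ring
  · rw [if_neg h2, if_neg h2]
    have h0 : N / 2 = 0 := by omega
    rw [h0]
    simp [Nat.choose_eq_zero_of_lt (by omega : 0 < m + 1)]


lemma Tkey (m j : ℕ) (hj : j < 2) :
    Tser m j * ∏ r ∈ Finset.range (2 * m + j + 1), (1 - C (R := ℝ) ((-1 : ℝ) ^ r) * X) =
      X ^ (2 * m + j) := by
  induction m with
  | zero =>
    interval_cases j
    · simp only [Nat.mul_zero, Nat.zero_add, Finset.prod_range_one, pow_zero, map_one, one_mul]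
      ext N
      rw [mul_sub, mul_one, map_sub, ← pow_one (X : PowerSeries ℝ),
        coeff_mul_X_pow', coeff_one]
      simp only [Tser, coeff_mk]
      by_cases h : 1 ≤ N
      · rw [if_pos h]
        simp only [Nat.zero_le, if_true, Nat.choose_zero_right, Nat.cast_one]
        rw [if_neg (by omega)]
        ring
      · rw [if_neg h, if_pos (by omega)]
        have : N = 0 := by omega
        simp [this]
    · have hp : ∏ r ∈ Finset.range (2 * 0 + 1 + 1), (1 - C (R := ℝ) ((-1 : ℝ) ^ r) * X)
          = 1 - X ^ 2 := by
        rw [Finset.prod_range_succ, Finset.prod_range_one]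
        simp only [pow_zero, pow_one, map_one, map_neg, one_mul]
        ring
      rw [hp]
      ext N
      rw [mul_sub, mul_one, map_sub, coeff_mul_X_pow', pow_one, coeff_X]
      simp only [Tser, coeff_mk, Nat.choose_zero_right, Nat.cast_one]
      rcases N with _ | _ | k
      · norm_num
      · norm_num
      · rw [if_pos (by omega : 2 ≤ k + 1 + 1)]
        have h2 : k + 1 + 1 - 2 = k := by omega
        have hm : (k + 1 + 1) % 2 = k % 2 := by omega
        rw [h2, hm, if_neg (by omega : ¬ (k + 1 + 1 = 1))]
        split_ifs <;> ring
  | succ m ih =>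
    have hr : 2 * (m + 1) + j + 1 = (2 * m + j + 1) + 1 + 1 := by ring
    rw [hr, Finset.prod_range_succ, Finset.prod_range_succ]
    have hcsq : (C (R := ℝ) ((-1 : ℝ) ^ (2 * m + j + 1))) ^ 2 = 1 := by
      rw [← map_pow, ← pow_mul, mul_comm, pow_mul]
      norm_num
    have hc : (1 - C (R := ℝ) ((-1 : ℝ) ^ (2 * m + j + 1)) * X) *
        (1 - C (R := ℝ) ((-1 : ℝ) ^ (2 * m + j + 1 + 1)) * X) = 1 - X ^ 2 := by
      have hnext : ((-1 : ℝ)) ^ (2 * m + j + 1 + 1) = -((-1 : ℝ)) ^ (2 * m + j + 1) := by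
        rw [pow_succ]; ring
      rw [hnext, map_neg]
      linear_combination (-(X ^ 2 : PowerSeries ℝ)) * hcsq
    calc Tser (m + 1) j * ((∏ r ∈ Finset.range (2 * m + j + 1), (1 - C (R := ℝ) ((-1 : ℝ) ^ r) * X)) *
          (1 - C (R := ℝ) ((-1 : ℝ) ^ (2 * m + j + 1)) * X) * (1 - C (R := ℝ) ((-1 : ℝ) ^ (2 * m + j + 1 + 1)) * X))
        = (Tser (m + 1) j * (1 - X ^ 2)) *
            ∏ r ∈ Finset.range (2 * m + j + 1), (1 - C (R := ℝ) ((-1 : ℝ) ^ r) * X) := by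
          rw [mul_assoc, hc]; ring
      _ = (Tser m j * ∏ r ∈ Finset.range (2 * m + j + 1), (1 - C (R := ℝ) ((-1 : ℝ) ^ r) * X)) * X ^ 2 := by
          rw [Tstep]; ring
      _ = X ^ (2 * (m + 1) + j) := by
          rw [ih, ← pow_add]
          congr 1
          omega

/-- The coefficient of `x^{2n+i}` in `x^{2m+j} · Π_{r=0}^{2m+j} (1 − (−1)^r x)⁻¹`
equals `C(n,m)` if `i ≥ j` and `0` if `i < j` (for `i, j ∈ {0,1}`): columns of the matrix
of `q`-binomial coefficients at `q = −1`. -/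
theorem stmt3 (n m i j : ℕ) (hi : i < 2) (hj : j < 2) :
    coeff (R := ℝ) (2 * n + i)
        ((X : PowerSeries ℝ) ^ (2 * m + j) *
          ∏ r ∈ Finset.range (2 * m + j + 1), (1 - C (R := ℝ) ((-1 : ℝ) ^ r) * X)⁻¹) =
      if j ≤ i then (n.choose m : ℝ) else 0 := by
  have hPQ : (∏ r ∈ Finset.range (2 * m + j + 1), (1 - C (R := ℝ) ((-1 : ℝ) ^ r) * X)) *
      ∏ r ∈ Finset.range (2 * m + j + 1), (1 - C (R := ℝ) ((-1 : ℝ) ^ r) * X)⁻¹ = 1 := by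
    rw [← Finset.prod_mul_distrib]
    apply Finset.prod_eq_one
    intro r _
    apply PowerSeries.mul_inv_cancel
    simp
  have hmain : (X : PowerSeries ℝ) ^ (2 * m + j) *
      ∏ r ∈ Finset.range (2 * m + j + 1), (1 - C (R := ℝ) ((-1 : ℝ) ^ r) * X)⁻¹ = Tser m j := by
    rw [← Tkey m j hj, mul_assoc, hPQ, mul_one]
  rw [hmain]
  simp only [Tser, coeff_mk]
  have h1 : (2 * n + i) % 2 = i := by omega
  have h2 : (2 * n + i) / 2 = n := by omega
  rw [h1, h2]
end

section
/- Let q ≥ 2 be an integer and c : ℕ → ℝ a sequence with c_0 = 1 and c_n ≠ 0 for all n. Define d : ℕ → ℝ by d_{qn+i} = c_n for 0 ≤ i < q, and the weight w(N,M) = d_M·d_{N−M}/d_N if N mod q ≥ M mod q and w(N,M) = 0 otherwise; let ∘ be the corresponding convolution and log_∘ the corresponding ∘-logarithm. Then for all real formal power series a, b with constant term 1: log_∘([b]_q · a(x^q)) = [log b]_q + g, where [f]_q = Σ_{n=0}^{q−1} f_n x^n, log b is the ordinary power series logarithm, · is the ordinary product, a(x^q) is substitution of x^q, and g is the series with g_N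 = 0 whenever q does not divide N and g_{qn} = (1/c_n) · [y^n] log(Σ_{k≥0} a_k c_k y^k). -/
open PowerSeries Finset

noncomputable section

lemma qdiv (q : ℕ) (hq : 0 < q) {m i : ℕ} (hi : i < q) : (q * m + i) / q = m := by
  rw [Nat.mul_add_div hq, Nat.div_eq_of_lt hi, add_zero]

lemma qmod (q : ℕ) (hq : 0 < q) {m i : ℕ} (hi : i < q) : (q * m + i) % q = i := by
  rw [Nat.mul_add_mod, Nat.mod_eq_of_lt hi]

lemma qsub (q : ℕ) {n m j i : ℕ} (hm : m ≤ n) (hi : i ≤ j) :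
    q * n + j - (q * m + i) = q * (n - m) + (j - i) := by
  have h1 : q * (n - m) + q * m = q * n := by
    rw [← Nat.mul_add, Nat.sub_add_cancel hm]
  omega
abbrev Sq (q : ℕ) := Polynomial ℝ ⧸ Ideal.span {(Polynomial.X : Polynomial ℝ) ^ q}
def piq (q : ℕ) : Polynomial ℝ →+* Sq q := Ideal.Quotient.mk _

lemma piq_eq_iff {q : ℕ} {p r : Polynomial ℝ} :
    piq q p = piq q r ↔ ∀ j < q, p.coeff j = r.coeff j := by
  show Ideal.Quotient.mk _ p = Ideal.Quotient.mk _ r ↔ _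
  rw [Ideal.Quotient.mk_eq_mk_iff_sub_mem, Ideal.mem_span_singleton, Polynomial.X_pow_dvd_iff]
  constructor
  · intro h j hj; have := h j hj; simp only [Polynomial.coeff_sub, sub_eq_zero] at this
    exact this
  · intro h j hj; simp [h j hj]

/-- the polynomial of coefficients `c n * f_{qn+j}`, `j < q`. -/
def Ep (q : ℕ) (c : ℕ → ℝ) (f : PowerSeries ℝ) (n : ℕ) : Polynomial ℝ :=
  ∑ j ∈ range q, Polynomial.monomial j (c n * coeff (q * n + j) f)

lemma coeff_Ep (q : ℕ) (c : ℕ → ℝ) (f : PowerSeries ℝ) (n i : ℕ) :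
    (Ep q c f n).coeff i = if i < q then c n * coeff (q * n + i) f else 0 := by
  rw [Ep, Polynomial.finset_sum_coeff]
  simp only [Polynomial.coeff_monomial]
  rw [Finset.sum_ite_eq' (range q)]
  simp [Finset.mem_range]

def Phi (q : ℕ) (c : ℕ → ℝ) (f : PowerSeries ℝ) : PowerSeries (Sq q) :=
  PowerSeries.mk fun n => piq q (Ep q c f n)

lemma coeff_Phi (q : ℕ) (c : ℕ → ℝ) (f : PowerSeries ℝ) (n : ℕ) :
    coeff n (Phi q c f) = piq q (Ep q c f n) := coeff_mk _ _

lemma Phi_injective (q : ℕ) (hq : 0 < q) (c : ℕ → ℝ) (hc : ∀ n, c n ≠ 0)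
    {f g : PowerSeries ℝ} (h : Phi q c f = Phi q c g) : f = g := by
  ext N
  have hN : N = q * (N / q) + N % q := (Nat.div_add_mod N q).symm
  have hmod : N % q < q := Nat.mod_lt _ hq
  have h1 := congrArg (coeff (N / q)) h
  rw [coeff_Phi, coeff_Phi, piq_eq_iff] at h1
  have h2 := h1 (N % q) hmod
  rw [coeff_Ep, coeff_Ep, if_pos hmod, if_pos hmod] at h2
  have := mul_left_cancel₀ (hc (N / q)) h2
  rwa [← hN] at this

lemma Phi_one (q : ℕ) (hq : 0 < q) (c : ℕ → ℝ) (hc0 : c 0 = 1) :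
    Phi q c 1 = 1 := by
  ext n
  rw [coeff_Phi, PowerSeries.coeff_one]
  split_ifs with h
  · subst h
    have : piq q 1 = 1 := map_one _
    rw [← this, piq_eq_iff]
    intro j hj
    rw [coeff_Ep, if_pos hj, hc0, Polynomial.coeff_one, PowerSeries.coeff_one]
    simp
  · have : piq q 0 = 0 := map_zero _
    rw [← this, piq_eq_iff]
    intro j hj
    rw [coeff_Ep, if_pos hj, PowerSeries.coeff_one, Polynomial.coeff_zero]
    have hne : q * n + j ≠ 0 := by
      have hn : n ≠ 0 := h
      have : 0 < q * n := Nat.mul_pos hq (Nat.pos_of_ne_zero hn)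
      omega
    rw [if_neg hne, mul_zero]

lemma Phi_sub (q : ℕ) (c : ℕ → ℝ) (f g : PowerSeries ℝ) :
    Phi q c (f - g) = Phi q c f - Phi q c g := by
  ext n
  rw [map_sub, coeff_Phi, coeff_Phi, coeff_Phi, ← map_sub]
  congr 1
  rw [Ep, Ep, Ep, ← Finset.sum_sub_distrib]
  refine Finset.sum_congr rfl fun j _ => ?_
  rw [← Polynomial.monomial_sub]
  congr 1
  rw [map_sub]; ring

lemma Phi_conv (q : ℕ) (hq : 0 < q) (c : ℕ → ℝ) (hc : ∀ n, c n ≠ 0) (f g : PowerSeries ℝ) :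
    Phi q c (conv (fun N M => if M % q ≤ N % q then c (M / q) * c ((N - M) / q) / c (N / q) else 0) f g)
      = Phi q c f * Phi q c g := by
  ext n
  rw [PowerSeries.coeff_mul]
  have hR : ∑ p ∈ antidiagonal n, coeff p.1 (Phi q c f) * coeff p.2 (Phi q c g)
      = piq q (∑ p ∈ antidiagonal n, Ep q c f p.1 * Ep q c g p.2) := by
    rw [map_sum]
    exact sum_congr rfl fun p _ => by rw [coeff_Phi, coeff_Phi, map_mul]
  rw [hR, coeff_Phi, piq_eq_iff]
  intro j hj
  have hNmod : (q * n + j) % q = j := qmod q hq hj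
  have hNdiv : (q * n + j) / q = n := qdiv q hq hj
  rw [coeff_Ep, if_pos hj]
  have hconv : coeff (q * n + j) (conv (fun N M => if M % q ≤ N % q then
      c (M / q) * c ((N - M) / q) / c (N / q) else 0) f g) =
      ∑ M ∈ range (q * n + j + 1), (if M % q ≤ (q * n + j) % q then
        c (M / q) * c ((q * n + j - M) / q) / c ((q * n + j) / q) else 0) *
        coeff M f * coeff (q * n + j - M) g := by
    rw [conv, coeff_mk]
  rw [hconv, Finset.mul_sum]
  have hterm : ∀ M ∈ range (q * n + j + 1),
      c n * ((if M % q ≤ (q * n + j) % q then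
        c (M / q) * c ((q * n + j - M) / q) / c ((q * n + j) / q) else 0) *
        coeff M f * coeff (q * n + j - M) g)
      = if M % q ≤ j then
          c (M / q) * c ((q * n + j - M) / q) * coeff M f * coeff (q * n + j - M) g
        else 0 := by
    intro M _
    rw [hNmod, hNdiv]
    split_ifs with h
    · field_simp
      rw [div_eq_iff (hc n)]; ring
    · simp
  rw [Finset.sum_congr rfl hterm, ← Finset.sum_filter]
  have key : ∑ M ∈ (range (q * n + j + 1)).filter (fun M => M % q ≤ j),
        c (M / q) * c ((q * n + j - M) / q) * coeff M f * coeff (q * n + j - M) g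
      = ∑ p ∈ (range (n + 1)) ×ˢ (range (j + 1)),
        (c p.1 * coeff (q * p.1 + p.2) f) *
          (c (n - p.1) * coeff (q * (n - p.1) + (j - p.2)) g) := by
    refine Finset.sum_nbij' (fun M => (M / q, M % q)) (fun p => q * p.1 + p.2) ?_ ?_ ?_ ?_ ?_
    · intro M hM
      simp only [Finset.mem_filter, Finset.mem_range] at hM
      simp only [Finset.mem_product, Finset.mem_range]
      have : M / q ≤ (q * n + j) / q := Nat.div_le_div_right (by omega)
      rw [hNdiv] at this
      exact ⟨by omega, by omega⟩
    · intro p hp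
      simp only [Finset.mem_product, Finset.mem_range] at hp
      simp only [Finset.mem_filter, Finset.mem_range]
      have h1 : q * p.1 ≤ q * n := Nat.mul_le_mul_left q (by omega)
      have h2 : (q * p.1 + p.2) % q = p.2 := qmod q hq (by omega)
      exact ⟨by omega, by omega⟩
    · intro M _
      exact Nat.div_add_mod M q
    · intro p hp
      simp only [Finset.mem_product, Finset.mem_range] at hp
      have hp2 : p.2 < q := by omega
      rw [qdiv q hq hp2, qmod q hq hp2]
    · intro M hM
      simp only [Finset.mem_filter, Finset.mem_range] at hM
      dsimp only
      have hm : M / q ≤ n := by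
        have : M / q ≤ (q * n + j) / q := Nat.div_le_div_right (by omega)
        rw [hNdiv] at this; omega
      have hMeq : q * (M / q) + M % q = M := Nat.div_add_mod M q
      have hsub : q * n + j - M = q * (n - M / q) + (j - M % q) := by
        conv_lhs => rw [← hMeq]
        exact qsub q hm hM.2
      rw [hsub, qdiv q hq (by omega), hMeq]
      ring
  rw [key]
  -- now compute the RHS polynomial coefficient
  rw [Polynomial.finset_sum_coeff]
  rw [Finset.Nat.sum_antidiagonal_eq_sum_range_succ_mk]
  have hRHS : ∀ m ∈ range (n + 1),
      (Ep q c f m * Ep q c g (n - m)).coeff j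
      = ∑ i ∈ range (j + 1),
          (c m * coeff (q * m + i) f) * (c (n - m) * coeff (q * (n - m) + (j - i)) g) := by
    intro m _
    rw [Polynomial.coeff_mul, Finset.Nat.sum_antidiagonal_eq_sum_range_succ_mk]
    refine sum_congr rfl fun i hi => ?_
    rw [Finset.mem_range] at hi
    rw [coeff_Ep, coeff_Ep, if_pos (by omega), if_pos (by omega)]
  rw [Finset.sum_congr rfl hRHS, ← Finset.sum_product']

lemma Phi_convPow (q : ℕ) (hq : 0 < q) (c : ℕ → ℝ) (hc0 : c 0 = 1) (hc : ∀ n, c n ≠ 0)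
    (g : PowerSeries ℝ) (k : ℕ) :
    Phi q c (convPow (fun N M => if M % q ≤ N % q then
        c (M / q) * c ((N - M) / q) / c (N / q) else 0) g k) = (Phi q c g) ^ k := by
  induction k with
  | zero => exact (Phi_one q hq c hc0).trans (pow_zero _).symm
  | succ k ih =>
    show Phi q c (conv _ g (convPow _ g k)) = _
    rw [Phi_conv q hq c hc, ih, pow_succ]
    ring

lemma convPow_order (w : ℕ → ℕ → ℝ) {g : PowerSeries ℝ} (hg : constantCoeff g = 0) :
    ∀ k N, N < k → coeff N (convPow w g k) = 0 := by
  intro k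
  induction k with
  | zero => intro N h; omega
  | succ k ih =>
    intro N h
    show coeff N (conv w g (convPow w g k)) = 0
    rw [conv, coeff_mk]
    refine Finset.sum_eq_zero fun m hm => ?_
    rw [Finset.mem_range] at hm
    rcases Nat.eq_zero_or_pos m with h0 | h0
    · subst h0
      rw [coeff_zero_eq_constantCoeff, hg, mul_zero, zero_mul]
    · rw [ih (N - m) (by omega), mul_zero]

lemma pow_order {S : Type} [CommRing S] {g : PowerSeries S} (hg : constantCoeff g = 0)
    {k N : ℕ} (h : N < k) : coeff N (g ^ k) = 0 := by
  have hdvd : (X : PowerSeries S) ^ k ∣ g ^ k :=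
    pow_dvd_pow_of_dvd (PowerSeries.X_dvd_iff.mpr hg) k
  exact (PowerSeries.X_pow_dvd_iff.mp hdvd) N h

/-- log coefficients -/
def Ck (k : ℕ) : ℝ := (-1) ^ (k - 1) / k

/-- `∘`-style logarithm with a uniformly large summation range. -/
def LogP (q : ℕ) {S : Type} [CommRing S] [Algebra ℝ S] (G : PowerSeries S) : PowerSeries S :=
  PowerSeries.mk fun n => ∑ k ∈ Finset.Icc 1 (n + q), Ck k • coeff n ((G - 1) ^ k)

lemma coeff_rsmul {S : Type} [CommRing S] [Algebra ℝ S] (r : ℝ) (F : PowerSeries S) (n : ℕ) :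
    coeff n (r • F) = r • coeff n F := rfl

lemma coeff_LogP_eq (q : ℕ) {S : Type} [CommRing S] [Algebra ℝ S] {G : PowerSeries S}
    (hG : ∀ m k, m + q ≤ k → coeff m ((G - 1) ^ k) = 0) (n K : ℕ) (hK : n + q ≤ K) :
    coeff n (LogP q G) = coeff n (∑ k ∈ Finset.Icc 1 K, Ck k • (G - 1) ^ k) := by
  rw [LogP, coeff_mk, map_sum]
  simp only [coeff_rsmul]
  refine Finset.sum_subset (Finset.Icc_subset_Icc le_rfl hK) fun k hk hk' => ?_
  rw [Finset.mem_Icc] at hk hk'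
  rw [hG n k (by omega), smul_zero]

lemma D1 (q : ℕ) {S : Type} [CommRing S] [Algebra ℝ S] {G : PowerSeries S}
    (hG : ∀ m k, m + q ≤ k → coeff m ((G - 1) ^ k) = 0) :
    d⁄dX S (LogP q G) * G = d⁄dX S G := by
  ext n
  set u : PowerSeries S := G - 1 with hu
  set K := n + 1 + q with hK
  set GK : PowerSeries S := ∑ k ∈ Finset.Icc 1 K, Ck k • u ^ k with hGK
  have hmul : coeff n (d⁄dX S (LogP q G) * G) = coeff n (d⁄dX S GK * G) := by
    rw [PowerSeries.coeff_mul, PowerSeries.coeff_mul]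
    refine Finset.sum_congr rfl fun p hp => ?_
    rw [Finset.HasAntidiagonal.mem_antidiagonal] at hp
    congr 1
    rw [PowerSeries.coeff_derivative, PowerSeries.coeff_derivative,
      coeff_LogP_eq q hG (p.1 + 1) K (by omega)]
  rw [hmul]
  have hdu : d⁄dX S u = d⁄dX S G := by
    rw [hu, map_sub, Derivation.map_one_eq_zero, sub_zero]
  have hdGK : d⁄dX S GK = (∑ t ∈ Finset.range K, ((-1 : ℝ) ^ t) • u ^ t) * d⁄dX S G := by
    rw [hGK, map_sum, Finset.sum_mul, ← Finset.Ico_add_one_right_eq_Icc, Finset.sum_Ico_eq_sum_range]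
    refine Finset.sum_congr rfl fun t ht => ?_
    rw [Derivation.map_smul_of_tower, Derivation.leibniz_pow, hdu]
    simp only [Nat.add_sub_cancel_left]
    rw [← Nat.cast_smul_eq_nsmul ℝ, smul_smul]
    have hCk : Ck (1 + t) * ((1 + t : ℕ) : ℝ) = (-1) ^ t := by
      rw [Ck]
      simp only [Nat.add_sub_cancel_left]
      rw [div_mul_cancel₀]
      exact Nat.cast_ne_zero.mpr (by omega)
    rw [hCk, smul_eq_mul, smul_mul_assoc]
  have h1 : ∀ t, ((-1 : ℝ) ^ t) • u ^ t = (-u) ^ t := by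
    intro t
    rw [Algebra.smul_def, map_pow, map_neg, map_one, ← neg_pow]
  have hgeom : (∑ t ∈ Finset.range K, ((-1 : ℝ) ^ t) • u ^ t) * G = 1 - (-u) ^ K := by
    have hGu : G = -(-u - 1) := by rw [hu]; ring
    rw [Finset.sum_congr rfl (fun t _ => h1 t), hGu, mul_neg, geom_sum_mul]
    ring
  rw [hdGK, mul_right_comm, hgeom, sub_mul, one_mul, map_sub]
  have hz : coeff n ((-u) ^ K * d⁄dX S G) = 0 := by
    rw [PowerSeries.coeff_mul]
    refine Finset.sum_eq_zero fun p hp => ?_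
    rw [Finset.HasAntidiagonal.mem_antidiagonal] at hp
    have hz1 : coeff p.1 ((-u) ^ K) = 0 := by
      rcases Nat.even_or_odd K with hE | hO
      · rw [hE.neg_pow]; exact hG p.1 K (by omega)
      · rw [hO.neg_pow, map_neg, hG p.1 K (by omega), neg_zero]
    rw [hz1, zero_mul]
  rw [hz, sub_zero]

lemma deriv_cancel {S : Type} [CommRing S] [Algebra ℝ S] {F G : PowerSeries S}
    (h : d⁄dX S F = d⁄dX S G) (h0 : coeff 0 F = coeff 0 G) : F = G := by
  ext n
  cases n with
  | zero => exact h0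
  | succ n =>
    have h1 := congrArg (coeff n) h
    rw [PowerSeries.coeff_derivative, PowerSeries.coeff_derivative] at h1
    have hu : IsUnit ((n : S) + 1) := by
      have he : ((n : S) + 1) = algebraMap ℝ S ((n : ℝ) + 1) := by
        rw [map_add, map_natCast, map_one]
      rw [he]
      exact (isUnit_iff_ne_zero.mpr (by positivity)).map (algebraMap ℝ S)
    exact hu.mul_right_cancel h1

lemma LogP_mul (q : ℕ) (hq : 0 < q) {S : Type} [CommRing S] [Algebra ℝ S]
    (ν : S) (hν : ν ^ q = 0) (A : PowerSeries S) (hA : constantCoeff A = 1) :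
    LogP q (PowerSeries.C (1 + ν) * A)
      = LogP q (PowerSeries.C (1 + ν)) + LogP q A := by
  set B : PowerSeries S := PowerSeries.C (1 + ν) with hB
  have hB1 : B - 1 = PowerSeries.C ν := by
    rw [hB, map_add, map_one]; ring
  have hA0 : constantCoeff (A - 1) = 0 := by rw [map_sub, hA, map_one, sub_self]
  have HV_A : ∀ m k, m + q ≤ k → coeff m ((A - 1) ^ k) = 0 := fun m k hk =>
    pow_order hA0 (by omega)
  have HV_BA : ∀ m k, m + q ≤ k → coeff m ((B * A - 1) ^ k) = 0 := by
    intro m k hk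
    have hsplit : B * A - 1 = (B - 1) + B * (A - 1) := by ring
    rw [hsplit, add_pow]
    rw [map_sum]
    refine Finset.sum_eq_zero fun i hi => ?_
    rw [Finset.mem_range] at hi
    rcases le_or_gt q i with hiq | hiq
    · have : (B - 1) ^ i = 0 := by
        rw [hB1, ← map_pow]
        have : ν ^ i = 0 := by
          have : ν ^ i = ν ^ q * ν ^ (i - q) := by rw [← pow_add]; congr 1; omega
          rw [this, hν, zero_mul]
        rw [this, map_zero]
      rw [this, zero_mul, zero_mul, map_zero]
    · have hre : (B - 1) ^ i * (B * (A - 1)) ^ (k - i) * (k.choose i : PowerSeries S)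
          = ((B - 1) ^ i * B ^ (k - i) * (k.choose i : PowerSeries S)) * (A - 1) ^ (k - i) := by
        rw [mul_pow]; ring
      rw [hre, PowerSeries.coeff_mul]
      refine Finset.sum_eq_zero fun p hp => ?_
      rw [Finset.HasAntidiagonal.mem_antidiagonal] at hp
      rw [pow_order hA0 (show p.2 < k - i by omega), mul_zero]
  have hBA1 : constantCoeff (B * A) = 1 + ν := by
    rw [map_mul, hA, mul_one, hB, PowerSeries.constantCoeff_C]
  have hUnit : IsUnit (B * A) := by
    rw [PowerSeries.isUnit_iff_constantCoeff, hBA1]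
    exact IsNilpotent.isUnit_one_add ⟨q, hν⟩
  have hdB : d⁄dX S B = 0 := by
    ext i
    rw [PowerSeries.coeff_derivative, hB, PowerSeries.coeff_C, if_neg (by omega), zero_mul,
      map_zero]
  have hLogB_coeff : ∀ i, 1 ≤ i → coeff i (LogP q B) = 0 := by
    intro i hi
    rw [LogP, coeff_mk]
    refine Finset.sum_eq_zero fun k hk => ?_
    rw [hB1, ← map_pow, PowerSeries.coeff_C, if_neg (by omega), smul_zero]
  have hdLogB : d⁄dX S (LogP q B) = 0 := by
    ext i
    rw [PowerSeries.coeff_derivative, hLogB_coeff (i + 1) (by omega), zero_mul, map_zero]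
  have hD_BA := D1 q HV_BA
  have hD_A := D1 q HV_A
  have hdBA : d⁄dX S (B * A) = B * d⁄dX S A := by
    rw [Derivation.leibniz, hdB]
    simp [smul_eq_mul]
  have hEq : d⁄dX S (LogP q (B * A)) * (B * A)
      = (d⁄dX S (LogP q B) + d⁄dX S (LogP q A)) * (B * A) := by
    rw [hD_BA, hdBA, hdLogB, zero_add]
    calc B * d⁄dX S A = d⁄dX S A * B := by ring
    _ = (d⁄dX S (LogP q A) * A) * B := by rw [hD_A]
    _ = d⁄dX S (LogP q A) * (B * A) := by ring
  have hd : d⁄dX S (LogP q (B * A)) = d⁄dX S (LogP q B + LogP q A) := by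
    rw [map_add]
    exact hUnit.mul_right_cancel hEq
  refine deriv_cancel hd ?_
  rw [map_add, LogP, LogP, LogP, coeff_mk, coeff_mk, coeff_mk]
  have h1 : ∀ k ∈ Finset.Icc 1 (0 + q), Ck k • coeff 0 ((B * A - 1) ^ k)
      = Ck k • coeff 0 ((B - 1) ^ k) := by
    intro k hk
    rw [coeff_zero_eq_constantCoeff_apply, coeff_zero_eq_constantCoeff_apply, map_pow, map_pow,
      map_sub, map_sub, hBA1, hB, PowerSeries.constantCoeff_C]
  have h2 : ∀ k ∈ Finset.Icc 1 (0 + q), Ck k • coeff 0 ((A - 1) ^ k) = 0 := by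
    intro k hk
    rw [Finset.mem_Icc] at hk
    rw [coeff_zero_eq_constantCoeff_apply, map_pow, hA0, zero_pow (by omega), smul_zero]
  rw [Finset.sum_congr rfl h1, Finset.sum_eq_zero h2, add_zero]

lemma coeff_truncQ_substPow (q : ℕ) (hq : 0 < q) (a b : PowerSeries ℝ) {n j : ℕ} (hj : j < q) :
    coeff (q * n + j) (truncQ q b * substPow q a) = coeff j b * coeff n a := by
  rw [PowerSeries.coeff_mul]
  have h0 : ∀ p ∈ Finset.HasAntidiagonal.antidiagonal (q * n + j), p ≠ (j, q * n) →
      coeff p.1 (truncQ q b) * coeff p.2 (substPow q a) = 0 := by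
    intro p hp hne
    rw [Finset.HasAntidiagonal.mem_antidiagonal] at hp
    rw [truncQ, substPow, coeff_mk, coeff_mk]
    by_cases h1 : p.1 < q
    · rw [if_pos h1]
      by_cases h2 : q ∣ p.2
      · exfalso
        obtain ⟨t, ht⟩ := h2
        have hmod : p.1 % q = j := by
          have e1 : (p.1 + q * t) % q = p.1 % q := Nat.add_mul_mod_self_left p.1 q t
          rw [← ht, hp, qmod q hq hj] at e1
          exact e1.symm
        have hp1 : p.1 = j := by rw [← Nat.mod_eq_of_lt h1, hmod]
        apply hne
        have hp2 : p.2 = q * n := by omega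
        exact Prod.ext_iff.mpr ⟨hp1, hp2⟩
      · rw [if_neg h2, mul_zero]
    · rw [if_neg h1, zero_mul]
  have h1 : (j, q * n) ∉ Finset.HasAntidiagonal.antidiagonal (q * n + j) →
      coeff j (truncQ q b) * coeff (q * n) (substPow q a) = 0 := by
    intro h
    exfalso
    exact h (by rw [Finset.HasAntidiagonal.mem_antidiagonal]; omega)
  rw [Finset.sum_eq_single (j, q * n) h0 h1]
  rw [truncQ, substPow, coeff_mk, coeff_mk, if_pos hj, if_pos ⟨n, rfl⟩,
    Nat.mul_div_cancel_left n hq]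

/-- the truncation polynomial of `b`. -/
def betaP (q : ℕ) (b : PowerSeries ℝ) : Polynomial ℝ :=
  ∑ j ∈ range q, Polynomial.monomial j (coeff j b)

lemma coeff_betaP (q : ℕ) (b : PowerSeries ℝ) (i : ℕ) :
    (betaP q b).coeff i = if i < q then coeff i b else 0 := by
  rw [betaP, Polynomial.finset_sum_coeff]
  simp only [Polynomial.coeff_monomial]
  rw [Finset.sum_ite_eq' (range q)]
  simp [Finset.mem_range]

lemma Phi_F (q : ℕ) (hq : 0 < q) (c : ℕ → ℝ) (a b : PowerSeries ℝ) :
    Phi q c (truncQ q b * substPow q a) =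
      PowerSeries.C (piq q (betaP q b)) *
        PowerSeries.mk (fun n => algebraMap ℝ (Sq q) (coeff n a * c n)) := by
  ext n
  rw [coeff_Phi, PowerSeries.coeff_C_mul, coeff_mk]
  have halg : algebraMap ℝ (Sq q) (coeff n a * c n) =
      piq q (Polynomial.C (coeff n a * c n)) := rfl
  rw [halg, ← map_mul, piq_eq_iff]
  intro j hj
  rw [coeff_Ep, if_pos hj, coeff_truncQ_substPow q hq a b hj,
    Polynomial.coeff_mul_C, coeff_betaP, if_pos hj]
  ring

lemma piq_smul (q : ℕ) (r : ℝ) (p : Polynomial ℝ) : piq q (r • p) = r • piq q p :=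
  map_smul (Ideal.Quotient.mkₐ ℝ _) r p

lemma HV_CA (q : ℕ) {S : Type} [CommRing S] [Algebra ℝ S]
    (ν : S) (hν : ν ^ q = 0) (A : PowerSeries S) (hA : constantCoeff A = 1) :
    ∀ m k, m + q ≤ k → coeff m ((PowerSeries.C (1 + ν) * A - 1) ^ k) = 0 := by
  set B : PowerSeries S := PowerSeries.C (1 + ν) with hB
  have hB1 : B - 1 = PowerSeries.C ν := by
    rw [hB, map_add, map_one]; ring
  have hA0 : constantCoeff (A - 1) = 0 := by rw [map_sub, hA, map_one, sub_self]
  intro m k hk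
  have hsplit : B * A - 1 = (B - 1) + B * (A - 1) := by ring
  rw [hsplit, add_pow, map_sum]
  refine Finset.sum_eq_zero fun i hi => ?_
  rw [Finset.mem_range] at hi
  rcases le_or_gt q i with hiq | hiq
  · have hz : (B - 1) ^ i = 0 := by
      rw [hB1, ← map_pow]
      have hzz : ν ^ i = 0 := by
        have : ν ^ i = ν ^ q * ν ^ (i - q) := by rw [← pow_add]; congr 1; omega
        rw [this, hν, zero_mul]
      rw [hzz, map_zero]
    rw [hz, zero_mul, zero_mul, map_zero]
  · have hre : (B - 1) ^ i * (B * (A - 1)) ^ (k - i) * (k.choose i : PowerSeries S)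
        = ((B - 1) ^ i * B ^ (k - i) * (k.choose i : PowerSeries S)) * (A - 1) ^ (k - i) := by
      rw [mul_pow]; ring
    rw [hre, PowerSeries.coeff_mul]
    refine Finset.sum_eq_zero fun p hp => ?_
    rw [Finset.HasAntidiagonal.mem_antidiagonal] at hp
    rw [pow_order hA0 (show p.2 < k - i by omega), mul_zero]

lemma Phi_convLog (q : ℕ) (hq : 0 < q) (c : ℕ → ℝ) (hc0 : c 0 = 1) (hc : ∀ n, c n ≠ 0)
    {F : PowerSeries ℝ} (hF : constantCoeff F = 1)
    (HV : ∀ m k, m + q ≤ k → coeff m ((Phi q c F - 1) ^ k) = 0) :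
    Phi q c (convLog (fun N M => if M % q ≤ N % q then
        c (M / q) * c ((N - M) / q) / c (N / q) else 0) F)
      = LogP q (Phi q c F) := by
  set w : ℕ → ℕ → ℝ := fun N M => if M % q ≤ N % q then
      c (M / q) * c ((N - M) / q) / c (N / q) else 0 with hw
  have hF0 : constantCoeff (F - 1) = 0 := by rw [map_sub, hF, map_one, sub_self]
  have hΦpow : ∀ n k, piq q (Ep q c (convPow w (F - 1) k) n)
      = coeff n ((Phi q c F - 1) ^ k) := by
    intro n k
    rw [← coeff_Phi, Phi_convPow q hq c hc0 hc, Phi_sub, Phi_one q hq c hc0]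
  ext n
  rw [coeff_Phi, LogP, coeff_mk]
  have hRHS : ∑ k ∈ Finset.Icc 1 (n + q), Ck k • coeff n ((Phi q c F - 1) ^ k)
      = piq q (∑ k ∈ Finset.Icc 1 (n + q), Ck k • Ep q c (convPow w (F - 1) k) n) := by
    rw [map_sum]
    refine Finset.sum_congr rfl fun k _ => ?_
    rw [piq_smul, hΦpow]
  rw [hRHS, piq_eq_iff]
  intro j hj
  -- both sides are `c n` times sums of the same summands over different ranges
  have hEcoeff : ∀ k, (Ep q c (convPow w (F - 1) k) n).coeff j
      = c n * coeff (q * n + j) (convPow w (F - 1) k) := by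
    intro k
    rw [coeff_Ep, if_pos hj]
  have hP1 : ∀ k, q * n + j < k → coeff (q * n + j) (convPow w (F - 1) k) = 0 :=
    fun k hk => convPow_order w hF0 k _ hk
  have hP2 : ∀ k, n + q ≤ k → coeff (q * n + j) (convPow w (F - 1) k) = 0 := by
    intro k hk
    have h1 : piq q (Ep q c (convPow w (F - 1) k) n) = piq q 0 := by
      rw [map_zero, hΦpow, HV n k hk]
    have h2 := (piq_eq_iff.mp h1) j hj
    rw [hEcoeff, Polynomial.coeff_zero] at h2
    exact (mul_eq_zero.mp h2).resolve_left (hc n)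
  -- compute coefficient of the polynomial sum on the right
  rw [Polynomial.finset_sum_coeff]
  simp only [Polynomial.coeff_smul, hEcoeff, smul_eq_mul]
  -- left side
  rw [coeff_Ep, if_pos hj]
  rw [convLog, coeff_mk, Finset.mul_sum]
  set g : ℕ → ℝ := fun k => c n * ((-1 : ℝ) ^ (k - 1) / k * coeff (q * n + j) (convPow w (F - 1) k)) with hg
  have hgz1 : ∀ k, q * n + j < k → g k = 0 := by
    intro k hk; rw [hg]; dsimp only; rw [hP1 k hk, mul_zero, mul_zero]
  have hgz2 : ∀ k, n + q ≤ k → g k = 0 := by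
    intro k hk; rw [hg]; dsimp only; rw [hP2 k hk, mul_zero, mul_zero]
  have e1 : ∑ k ∈ Finset.Icc 1 (q * n + j), g k
      = ∑ k ∈ Finset.Icc 1 (q * n + j + (n + q)), g k := by
    refine Finset.sum_subset (Finset.Icc_subset_Icc le_rfl (by omega)) fun k hk hk' => ?_
    rw [Finset.mem_Icc] at hk hk'
    exact hgz1 k (by omega)
  have e2 : ∑ k ∈ Finset.Icc 1 (n + q), g k
      = ∑ k ∈ Finset.Icc 1 (q * n + j + (n + q)), g k := by
    refine Finset.sum_subset (Finset.Icc_subset_Icc le_rfl (by omega)) fun k hk hk' => ?_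
    rw [Finset.mem_Icc] at hk hk'
    exact hgz2 k (by omega)
  have goal1 : ∑ k ∈ Finset.Icc 1 (q * n + j), g k = ∑ k ∈ Finset.Icc 1 (n + q), g k := by
    rw [e1, e2]
  -- match the `g` shapes
  calc ∑ k ∈ Finset.Icc 1 (q * n + j),
        c n * ((-1 : ℝ) ^ (k - 1) / k * coeff (q * n + j) (convPow w (F - 1) k))
      = ∑ k ∈ Finset.Icc 1 (n + q), g k := goal1
    _ = ∑ k ∈ Finset.Icc 1 (n + q),
        Ck k * (c n * coeff (q * n + j) (convPow w (F - 1) k)) := by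
      refine Finset.sum_congr rfl fun k _ => ?_
      rw [hg]; dsimp only; rw [Ck]; ring

lemma coeff_LogP_C {S : Type} [CommRing S] [Algebra ℝ S] (q : ℕ) (s : S) (n : ℕ) :
    coeff n (LogP q (PowerSeries.C s))
      = if n = 0 then ∑ k ∈ Finset.Icc 1 q, Ck k • (s - 1) ^ k else 0 := by
  rw [LogP, coeff_mk]
  have hC : ∀ k : ℕ, (PowerSeries.C s - 1) ^ k = PowerSeries.C ((s - 1) ^ k) := by
    intro k
    rw [map_pow, map_sub, map_one]
  simp_rw [hC, PowerSeries.coeff_C]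
  split_ifs with h
  · subst h
    simp
  · simp

lemma logSeries_coeff_zero (f : PowerSeries ℝ) : coeff 0 (logSeries f) = 0 := by
  rw [logSeries, coeff_mk]
  simp

lemma logSeries_ext {f : PowerSeries ℝ} (hf : constantCoeff f = 1) (N K : ℕ) (hK : N ≤ K) :
    coeff N (logSeries f) = ∑ k ∈ Finset.Icc 1 K, Ck k * coeff N ((f - 1) ^ k) := by
  have hf0 : constantCoeff (f - 1) = 0 := by rw [map_sub, hf, map_one, sub_self]
  rw [logSeries, coeff_mk]
  have : ∀ k ∈ Finset.Icc 1 N, (-1 : ℝ) ^ (k - 1) / k * coeff N ((f - 1) ^ k)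
      = Ck k * coeff N ((f - 1) ^ k) := fun k _ => rfl
  rw [Finset.sum_congr rfl this]
  refine Finset.sum_subset (Finset.Icc_subset_Icc le_rfl hK) fun k hk hk' => ?_
  rw [Finset.mem_Icc] at hk hk'
  rw [pow_order hf0 (show N < k by omega), mul_zero]

lemma coeff_pow_congr {R : Type} [CommRing R] {f g : PowerSeries R} {j : ℕ}
    (h : ∀ i ≤ j, coeff i f = coeff i g) (k : ℕ) :
    ∀ i ≤ j, coeff i (f ^ k) = coeff i (g ^ k) := by
  induction k with
  | zero => intro i hi; rfl
  | succ k ih =>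
    intro i hi
    rw [pow_succ, pow_succ, PowerSeries.coeff_mul, PowerSeries.coeff_mul]
    refine Finset.sum_congr rfl fun p hp => ?_
    rw [Finset.HasAntidiagonal.mem_antidiagonal] at hp
    rw [ih p.1 (by omega), h p.2 (by omega)]

lemma coeff_LogP_map (q : ℕ) {A' : PowerSeries ℝ} (hA' : constantCoeff A' = 1) (n : ℕ) :
    coeff n (LogP q (PowerSeries.map (algebraMap ℝ (Sq q)) A'))
      = algebraMap ℝ (Sq q) (coeff n (logSeries A')) := by
  rw [LogP, coeff_mk]
  have h1 : ∀ k : ℕ, coeff n ((PowerSeries.map (algebraMap ℝ (Sq q)) A' - 1) ^ k)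
      = algebraMap ℝ (Sq q) (coeff n ((A' - 1) ^ k)) := by
    intro k
    have h2 : PowerSeries.map (algebraMap ℝ (Sq q)) (A' - 1)
        = PowerSeries.map (algebraMap ℝ (Sq q)) A' - 1 := by rw [map_sub, map_one]
    rw [← h2, ← map_pow, PowerSeries.coeff_map]
  simp_rw [h1]
  have h3 : ∀ k (x : ℝ), Ck k • algebraMap ℝ (Sq q) x = algebraMap ℝ (Sq q) (Ck k * x) := by
    intro k x
    rw [map_mul, ← Algebra.smul_def]
  simp_rw [h3, ← map_sum]
  rw [← logSeries_ext hA' n (n + q) (by omega)]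

lemma Phi_RHS (q : ℕ) (hq : 0 < q) (c : ℕ → ℝ) (hc0 : c 0 = 1) (hc : ∀ n, c n ≠ 0)
    (a b : PowerSeries ℝ) (ha : constantCoeff a = 1) (hb : constantCoeff b = 1) :
    Phi q c (truncQ q (logSeries b) +
        PowerSeries.mk (fun N => if q ∣ N then
          (1 / c (N / q)) *
            coeff (N / q) (logSeries (PowerSeries.mk fun k => coeff k a * c k)) else 0))
      = LogP q (PowerSeries.C (piq q (betaP q b)))
        + LogP q (PowerSeries.map (algebraMap ℝ (Sq q))
            (PowerSeries.mk fun k => coeff k a * c k)) := by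
  set A' : PowerSeries ℝ := PowerSeries.mk fun k => coeff k a * c k with hA'
  have hA'1 : constantCoeff A' = 1 := by
    rw [hA', ← coeff_zero_eq_constantCoeff_apply, coeff_mk,
      coeff_zero_eq_constantCoeff_apply, ha, hc0, one_mul]
  ext n
  rw [coeff_Phi, map_add, coeff_LogP_C, coeff_LogP_map q hA'1]
  cases n with
  | zero =>
    rw [if_pos rfl, logSeries_coeff_zero, map_zero, add_zero]
    have hsk : ∀ k : ℕ, (piq q (betaP q b) - 1) ^ k = piq q ((betaP q b - 1) ^ k) := by
      intro k
      rw [map_pow, map_sub, map_one]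
    have hsum : ∑ k ∈ Finset.Icc 1 q, Ck k • (piq q (betaP q b) - 1) ^ k
        = piq q (∑ k ∈ Finset.Icc 1 q, Ck k • (betaP q b - 1) ^ k) := by
      rw [map_sum]
      exact Finset.sum_congr rfl fun k _ => by rw [hsk, piq_smul]
    rw [hsum, piq_eq_iff]
    intro j hj
    -- LHS polynomial coefficient
    rw [coeff_Ep, if_pos hj, hc0, one_mul]
    have hj0 : q * 0 + j = j := by omega
    rw [hj0, map_add, coeff_mk]
    have hmk : (if q ∣ j then (1 / c (j / q)) * coeff (j / q) (logSeries A') else 0) = 0 := by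
      rcases Nat.eq_zero_or_pos j with h0 | h0
      · subst h0
        rw [if_pos (dvd_zero q), Nat.zero_div, logSeries_coeff_zero, mul_zero]
      · rw [if_neg]
        intro hdvd
        have := Nat.le_of_dvd h0 hdvd
        omega
    rw [truncQ, coeff_mk, if_pos hj, hmk, add_zero]
    -- RHS polynomial coefficient
    rw [Polynomial.finset_sum_coeff]
    simp only [Polynomial.coeff_smul, smul_eq_mul]
    -- identify polynomial power coefficients with series ones
    have hco : ∀ k : ℕ, ((betaP q b - 1) ^ k).coeff j
        = coeff j ((((betaP q b : Polynomial ℝ) : PowerSeries ℝ) - 1) ^ k) := by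
      intro k
      rw [← Polynomial.coeff_coe]
      push_cast
      rfl
    have hagree : ∀ i ≤ j, coeff i (((betaP q b : Polynomial ℝ) : PowerSeries ℝ) - 1)
        = coeff i (b - 1) := by
      intro i hi
      rw [map_sub, map_sub, Polynomial.coeff_coe, coeff_betaP, if_pos (by omega)]
    have hpows : ∀ k : ℕ, ((betaP q b - 1) ^ k).coeff j = coeff j ((b - 1) ^ k) := by
      intro k
      rw [hco k]
      exact coeff_pow_congr hagree k j le_rfl
    simp_rw [hpows]
    exact logSeries_ext hb j q (by omega)
  | succ n =>
    rw [if_neg (by omega), zero_add]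
    have halg : algebraMap ℝ (Sq q) (coeff (n + 1) (logSeries A'))
        = piq q (Polynomial.C (coeff (n + 1) (logSeries A'))) := rfl
    rw [halg, piq_eq_iff]
    intro j hj
    rw [coeff_Ep, if_pos hj, map_add, coeff_mk, Polynomial.coeff_C]
    have hqn : q ≤ q * (n + 1) := Nat.le_mul_of_pos_right q (by omega)
    have htr : coeff (q * (n + 1) + j) (truncQ q (logSeries b)) = 0 := by
      rw [truncQ, coeff_mk, if_neg]
      omega
    rw [htr, zero_add]
    rcases Nat.eq_zero_or_pos j with h0 | h0
    · subst h0
      rw [if_pos rfl, if_pos ⟨n + 1, by omega⟩]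
      have hdiv : (q * (n + 1) + 0) / q = n + 1 := qdiv q hq hq
      rw [hdiv, one_div]
      exact mul_inv_cancel_left₀ (hc (n + 1)) _
    · have hndvd : ¬ q ∣ (q * (n + 1) + j) := by
        intro hdvd
        have hmod : (q * (n + 1) + j) % q = j := qmod q hq hj
        rw [Nat.dvd_iff_mod_eq_zero] at hdvd
        omega
      rw [if_neg hndvd, mul_zero, if_neg (by omega)]

end

/-- The `∘`-logarithm of `[b]_q · a(x^q)` for the weight `w(N,M) = d_M d_{N−M}/d_N`
(when `N % q ≥ M % q`, else `0`), where `d_{qn+i} = c_n` for `0 ≤ i < q`. -/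
theorem stmt4 (q : ℕ) (hq : 2 ≤ q) (c : ℕ → ℝ) (hc0 : c 0 = 1) (hc : ∀ n, c n ≠ 0)
    (a b : PowerSeries ℝ) (ha : constantCoeff a = 1) (hb : constantCoeff b = 1) :
    convLog
        (fun N M => if M % q ≤ N % q then c (M / q) * c ((N - M) / q) / c (N / q) else 0)
        (truncQ q b * substPow q a) =
      truncQ q (logSeries b) +
        PowerSeries.mk (fun N =>
          if q ∣ N then
            (1 / c (N / q)) *
              coeff (N / q) (logSeries (PowerSeries.mk fun k => coeff k a * c k))
          else 0) := by
  have hq0 : 0 < q := by omega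
  set F : PowerSeries ℝ := truncQ q b * substPow q a with hF
  set A' : PowerSeries ℝ := PowerSeries.mk fun k => coeff k a * c k with hA'
  have hA'1 : constantCoeff A' = 1 := by
    rw [hA', ← coeff_zero_eq_constantCoeff_apply, coeff_mk,
      coeff_zero_eq_constantCoeff_apply, ha, hc0, one_mul]
  set s : Sq q := piq q (betaP q b) with hs
  have hβ0 : (betaP q b - 1).coeff 0 = 0 := by
    rw [Polynomial.coeff_sub, coeff_betaP, if_pos hq0, Polynomial.coeff_one,
      coeff_zero_eq_constantCoeff_apply, hb]
    norm_num
  have hν : (s - 1) ^ q = 0 := by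
    have h1 : s - 1 = piq q (betaP q b - 1) := by rw [hs, map_sub, map_one]
    rw [h1, ← map_pow]
    have hdvd : (Polynomial.X : Polynomial ℝ) ^ q ∣ (betaP q b - 1) ^ q :=
      pow_dvd_pow_of_dvd (Polynomial.X_dvd_iff.mpr hβ0) q
    have h2 : piq q ((betaP q b - 1) ^ q) = piq q 0 := by
      refine piq_eq_iff.mpr fun j hj => ?_
      rw [Polynomial.X_pow_dvd_iff.mp hdvd j hj, Polynomial.coeff_zero]
    rw [h2, map_zero]
  set Amap : PowerSeries (Sq q) :=
    PowerSeries.mk fun n => algebraMap ℝ (Sq q) (coeff n a * c n) with hAm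
  have hAmapmap : Amap = PowerSeries.map (algebraMap ℝ (Sq q)) A' := by
    ext m
    rw [hAm, coeff_mk, PowerSeries.coeff_map, hA', coeff_mk]
  have hAmap1 : constantCoeff Amap = 1 := by
    rw [hAmapmap, ← coeff_zero_eq_constantCoeff_apply, PowerSeries.coeff_map,
      coeff_zero_eq_constantCoeff_apply, hA'1, map_one]
  have hPhiF : Phi q c F = PowerSeries.C s * Amap := Phi_F q hq0 c a b
  have hs1 : (PowerSeries.C s : PowerSeries (Sq q))
      = PowerSeries.C (1 + (s - 1)) := by
    congr 1
    ring
  have HV' : ∀ m k, m + q ≤ k → coeff m ((Phi q c F - 1) ^ k) = 0 := by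
    intro m k hk
    rw [hPhiF, hs1]
    exact HV_CA q (s - 1) hν Amap hAmap1 m k hk
  have hF1 : constantCoeff F = 1 := by
    have h00 := coeff_truncQ_substPow q hq0 a b (n := 0) hq0
    rw [show q * 0 + 0 = 0 by omega] at h00
    rw [← coeff_zero_eq_constantCoeff_apply, hF, h00,
      coeff_zero_eq_constantCoeff_apply, coeff_zero_eq_constantCoeff_apply, ha, hb, one_mul]
  have hL := Phi_convLog q hq0 c hc0 hc hF1 HV'
  have hLM : LogP q (Phi q c F) = LogP q (PowerSeries.C s) + LogP q Amap := by
    rw [hPhiF, hs1]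
    exact LogP_mul q hq0 (s - 1) hν Amap hAmap1
  apply Phi_injective q hq0 c hc
  rw [hL, hLM, hs1]
  rw [Phi_RHS q hq0 c hc0 hc a b ha hb, ← hAmapmap, hs1]
end

section
/- Let q ≥ 2 and k ≥ 1 be integers. For all n, m ∈ ℕ and all 0 ≤ i, j < q^k: W_q(q^k·n + i, q^k·m + j) = W_q(n,m) · W_q(i,j). -/
open Finset

open scoped Classical in
/-- The `(N,M)` entry of the generalized Sierpinski matrix `P_{[0,q]}`:
`W_q(N,M) = 1` if `N mod q^r ≥ M mod q^r` for every `r ≥ 1`, else `0`. -/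
noncomputable def Wq (q N M : ℕ) : ℝ :=
  if ∀ r : ℕ, 1 ≤ r → M % q ^ r ≤ N % q ^ r then 1 else 0

lemma mod_low (q k r n i : ℕ) (hr : r ≤ k) :
    (q ^ k * n + i) % q ^ r = i % q ^ r := by
  have h : q ^ k * n = q ^ r * (q ^ (k - r) * n) := by
    rw [← mul_assoc, ← pow_add]
    congr 2
    omega
  rw [h, Nat.mul_add_mod]

lemma mod_high (q k r n i : ℕ) (hq : 2 ≤ q) (hi : i < q ^ k) (hr : k ≤ r) :
    (q ^ k * n + i) % q ^ r = q ^ k * (n % q ^ (r - k)) + i := by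
  have hqr : q ^ r = q ^ (r - k) * q ^ k := by
    rw [← pow_add]; congr 1; omega
  have hdm := Nat.div_add_mod n (q ^ (r - k))
  have h1 : q ^ k * n + i = q ^ r * (n / q ^ (r - k)) + (q ^ k * (n % q ^ (r - k)) + i) := by
    rw [hqr]; nlinarith [hdm]
  rw [h1, Nat.mul_add_mod]
  apply Nat.mod_eq_of_lt
  have h2 : n % q ^ (r - k) + 1 ≤ q ^ (r - k) := Nat.mod_lt _ (by positivity)
  calc q ^ k * (n % q ^ (r - k)) + i < q ^ k * (n % q ^ (r - k) + 1) := by nlinarith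
    _ ≤ q ^ k * q ^ (r - k) := Nat.mul_le_mul_left _ h2
    _ = q ^ r := by rw [← pow_add]; congr 1; omega

lemma cmp_lemma (c a b i j : ℕ) (hi : i < c) (h : c * b + j ≤ c * a + i) : b ≤ a := by
  by_contra hab
  push_neg at hab
  have : c * (a + 1) ≤ c * b := Nat.mul_le_mul_left _ hab
  nlinarith

/-- Multiplicativity of the Sierpinski entries:
`W_q(q^k·n + i, q^k·m + j) = W_q(n,m) · W_q(i,j)` for `0 ≤ i, j < q^k`. -/
theorem stmt5 (q k : ℕ) (hq : 2 ≤ q) (hk : 1 ≤ k) (n m i j : ℕ)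
    (hi : i < q ^ k) (hj : j < q ^ k) :
    Wq q (q ^ k * n + i) (q ^ k * m + j) = Wq q n m * Wq q i j := by
  have key : (∀ r, 1 ≤ r → (q ^ k * m + j) % q ^ r ≤ (q ^ k * n + i) % q ^ r) ↔
      ((∀ r, 1 ≤ r → m % q ^ r ≤ n % q ^ r) ∧ (∀ r, 1 ≤ r → j % q ^ r ≤ i % q ^ r)) := by
    constructor
    · intro h
      have hji : j ≤ i := by
        have := h k hk
        rw [mod_low q k k m j le_rfl, mod_low q k k n i le_rfl,
          Nat.mod_eq_of_lt hj, Nat.mod_eq_of_lt hi] at this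
        exact this
      constructor
      · intro s hs
        have := h (k + s) (by omega)
        rw [mod_high q k (k + s) m j hq hj (by omega),
          mod_high q k (k + s) n i hq hi (by omega)] at this
        simp only [Nat.add_sub_cancel_left] at this
        exact cmp_lemma (q ^ k) _ _ i j hi this
      · intro r hr
        rcases le_or_gt r k with hrk | hrk
        · have := h r hr
          rwa [mod_low q k r m j hrk, mod_low q k r n i hrk] at this
        · have hik : i < q ^ r := lt_of_lt_of_le hi (Nat.pow_le_pow_right (by omega) (by omega))
          have hjk : j < q ^ r := lt_of_lt_of_le hj (Nat.pow_le_pow_right (by omega) (by omega))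
          rw [Nat.mod_eq_of_lt hjk, Nat.mod_eq_of_lt hik]
          exact hji
    · rintro ⟨hnm, hij⟩ r hr
      rcases le_or_gt r k with hrk | hrk
      · rw [mod_low q k r m j hrk, mod_low q k r n i hrk]
        exact hij r hr
      · rw [mod_high q k r m j hq hj (by omega), mod_high q k r n i hq hi (by omega)]
        have hji : j ≤ i := by
          have := hij k hk
          rwa [Nat.mod_eq_of_lt hj, Nat.mod_eq_of_lt hi] at this
        exact Nat.add_le_add (Nat.mul_le_mul_left _ (hnm (r - k) (by omega))) hji
  simp only [Wq, key]
  split_ifs with h h1 h2 h3 h4 h5 <;> simp_all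
end

section
/- Let q ≥ 2 and k ≥ 1 be integers. For all real formal power series a, b: a(x^{q^k}) ∘ b(x^{q^k}) = (a ∘ b)(x^{q^k}), where ∘ is the P_{[0,q]}-convolution and f(x^{q^k}) denotes substitution of x^{q^k} for x. Hence the map a ↦ a(x^{q^k}) is an algebra embedding of the P_{[0,q]}-convolution algebra onto the subalgebra of series in x^{q^k}. -/
open PowerSeries Finset

lemma Wq_mul (q k N M : ℕ) (hq : 2 ≤ q) (hk : 1 ≤ k) :
    Wq q (q ^ k * N) (q ^ k * M) = Wq q N M := by
  have hqpos : 0 < q ^ k := pow_pos (by omega) k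
  have h : (∀ r : ℕ, 1 ≤ r → q ^ k * M % q ^ r ≤ q ^ k * N % q ^ r) ↔
      (∀ r : ℕ, 1 ≤ r → M % q ^ r ≤ N % q ^ r) := by
    constructor
    · intro h s hs
      have := h (k + s) (by omega)
      rw [pow_add, Nat.mul_mod_mul_left, Nat.mul_mod_mul_left] at this
      exact Nat.le_of_mul_le_mul_left this hqpos
    · intro h r hr
      rcases le_or_gt r k with hrk | hrk
      · have hd : q ^ r ∣ q ^ k * M := Dvd.dvd.mul_right (pow_dvd_pow q hrk) M
        simp [Nat.eq_zero_of_dvd_of_lt, Nat.mod_eq_zero_of_dvd hd]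
      · have hre : r = k + (r - k) := by omega
        rw [hre, pow_add, Nat.mul_mod_mul_left, Nat.mul_mod_mul_left]
        exact Nat.mul_le_mul_left _ (h (r - k) (by omega))
  unfold Wq
  by_cases hc : ∀ r : ℕ, 1 ≤ r → M % q ^ r ≤ N % q ^ r
  · rw [if_pos (h.mpr hc), if_pos hc]
  · rw [if_neg (fun hh => hc (h.mp hh)), if_neg hc]

/-- `a(x^{q^k}) ∘ b(x^{q^k}) = (a ∘ b)(x^{q^k})` for the `P_{[0,q]}`-convolution;
together with injectivity, `a ↦ a(x^{q^k})` is an algebra embedding of the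
`P_{[0,q]}`-convolution algebra onto the subalgebra of series in `x^{q^k}`. -/
theorem stmt7 (q k : ℕ) (hq : 2 ≤ q) (hk : 1 ≤ k) :
    (∀ a b : PowerSeries ℝ,
      conv (Wq q) (substPow (q ^ k) a) (substPow (q ^ k) b) =
        substPow (q ^ k) (conv (Wq q) a b)) ∧
    Function.Injective (substPow (q ^ k)) := by
  set t := q ^ k with ht
  have htpos : 0 < t := pow_pos (by omega) k
  constructor
  · intro a b
    ext n
    simp only [conv, substPow, coeff_mk]
    by_cases hn : t ∣ n
    · obtain ⟨N, rfl⟩ := hn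
      rw [if_pos (Dvd.intro N rfl), Nat.mul_div_cancel_left N htpos]
      have hsub : (Finset.range (N + 1)).image (fun M => t * M) ⊆
          Finset.range (t * N + 1) := by
        intro x hx
        obtain ⟨M, hM, rfl⟩ := Finset.mem_image.mp hx
        exact Finset.mem_range.mpr
          (Nat.lt_succ_iff.mpr (Nat.mul_le_mul_left t (Nat.lt_succ_iff.mp (Finset.mem_range.mp hM))))
      have hzero : ∀ m ∈ Finset.range (t * N + 1),
          m ∉ (Finset.range (N + 1)).image (fun M => t * M) →
          (Wq q (t * N) m * if t ∣ m then coeff (m / t) a else 0) *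
            (if t ∣ t * N - m then coeff ((t * N - m) / t) b else 0) = 0 := by
        intro m hm hm'
        by_cases hdm : t ∣ m
        · obtain ⟨M, rfl⟩ := hdm
          exfalso
          apply hm'
          refine Finset.mem_image.mpr ⟨M, Finset.mem_range.mpr ?_, rfl⟩
          have h1 := Finset.mem_range.mp hm
          have h2 : M ≤ N := Nat.le_of_mul_le_mul_left (by omega) htpos
          omega
        · rw [if_neg hdm]
          ring
      rw [← Finset.sum_subset hsub hzero,
        Finset.sum_image (fun x _ y _ h => Nat.eq_of_mul_eq_mul_left htpos h)]
      refine Finset.sum_congr rfl fun M hM => ?_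
      have hM' : M ≤ N := Nat.lt_succ_iff.mp (Finset.mem_range.mp hM)
      rw [if_pos (Dvd.intro M rfl), Nat.mul_div_cancel_left M htpos,
        ← Nat.mul_sub, if_pos (Dvd.intro (N - M) rfl),
        Nat.mul_div_cancel_left _ htpos, Wq_mul q k N M hq hk]
    · rw [if_neg hn]
      refine Finset.sum_eq_zero fun m hm => ?_
      by_cases hdm : t ∣ m
      · have hdnm : ¬ t ∣ (n - m) := by
          intro h
          have hle : m ≤ n := Nat.lt_succ_iff.mp (Finset.mem_range.mp hm)
          exact hn (Nat.add_sub_cancel' hle ▸ Nat.dvd_add hdm h)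
        rw [if_neg hdnm]; ring
      · rw [if_neg hdm]; ring
  · intro a b h
    ext n
    have := congrArg (coeff (t * n)) h
    simpa [substPow, Nat.mul_div_cancel_left _ htpos, Dvd.intro n rfl] using this
end

section
/- Let q ≥ 2 be an integer and let a, b be q-fractal real formal power series. Then c = a ∘ b (the P_{[0,q]}-convolution) is q-fractal, and for 0 ≤ n < q one has c_n = Σ_{m=0}^n a_m·b_{n−m}. Moreover the ∘-inverse of a q-fractal series is q-fractal; hence the q-fractal series form a group under the P_{[0,q]}-convolution, isomorphic to the group determined by their first q coefficients under ordinary truncated multiplication. -/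
open PowerSeries Finset

/-- A real formal power series is `q`-fractal if `a_0 = 1` and
`a_{qn+i} = a_n·a_i` for all `n ≥ 0` and `0 ≤ i < q`. -/
def IsFractal (q : ℕ) (a : PowerSeries ℝ) : Prop :=
  coeff 0 a = 1 ∧ ∀ n i : ℕ, i < q → coeff (q * n + i) a = coeff n a * coeff i a

section Aux

variable {q : ℕ}

lemma mod_pow_succ (hq : 0 < q) {j : ℕ} (hj : j < q) (m s : ℕ) :
    (q * m + j) % q ^ (s + 1) = q * (m % q ^ s) + j := by
  have h1 : q * m + j = (q * (m % q ^ s) + j) + q ^ (s + 1) * (m / q ^ s) := by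
    conv_lhs => rw [← Nat.mod_add_div m (q ^ s)]
    ring
  have h2 : q * (m % q ^ s) + j < q ^ (s + 1) := by
    have hm : m % q ^ s < q ^ s := Nat.mod_lt _ (Nat.pow_pos hq)
    calc q * (m % q ^ s) + j < q * (m % q ^ s) + q := by omega
      _ = q * (m % q ^ s + 1) := by ring
      _ ≤ q * q ^ s := Nat.mul_le_mul_left _ (by omega)
      _ = q ^ (s + 1) := by ring
  rw [h1, Nat.add_mul_mod_self_left, Nat.mod_eq_of_lt h2]

lemma wq_split_iff (hq : 0 < q) {i j : ℕ} (hi : i < q) (hj : j < q) (n m : ℕ) :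
    (∀ r : ℕ, 1 ≤ r → (q * m + j) % q ^ r ≤ (q * n + i) % q ^ r) ↔
      (j ≤ i ∧ ∀ r : ℕ, 1 ≤ r → m % q ^ r ≤ n % q ^ r) := by
  constructor
  · intro h
    have hji : j ≤ i := by
      have h1 := h 1 le_rfl
      rw [pow_one, Nat.mul_add_mod, Nat.mul_add_mod, Nat.mod_eq_of_lt hi,
        Nat.mod_eq_of_lt hj] at h1
      exact h1
    refine ⟨hji, fun r hr => ?_⟩
    obtain ⟨s, rfl⟩ : ∃ s, r = s + 1 := ⟨r - 1, by omega⟩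
    have h2 := h (s + 2) (by omega)
    rw [mod_pow_succ hq hj, mod_pow_succ hq hi] at h2
    have h3 : q * (m % q ^ (s + 1)) < q * (n % q ^ (s + 1) + 1) := by
      calc q * (m % q ^ (s + 1)) ≤ q * (m % q ^ (s + 1)) + j := by omega
        _ ≤ q * (n % q ^ (s + 1)) + i := h2
        _ < q * (n % q ^ (s + 1)) + q := by omega
        _ = q * (n % q ^ (s + 1) + 1) := by ring
    exact Nat.lt_succ_iff.mp (Nat.lt_of_mul_lt_mul_left h3)
  · rintro ⟨hji, h⟩ r hr
    obtain ⟨s, rfl⟩ : ∃ s, r = s + 1 := ⟨r - 1, by omega⟩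
    rw [mod_pow_succ hq hj, mod_pow_succ hq hi]
    have hs : m % q ^ s ≤ n % q ^ s := by
      rcases Nat.eq_zero_or_pos s with rfl | hs
      · simp [Nat.mod_one]
      · exact h s hs
    exact Nat.add_le_add (Nat.mul_le_mul_left _ hs) hji

lemma wq_split (hq : 0 < q) {i j : ℕ} (hi : i < q) (hj : j < q) (n m : ℕ) :
    Wq q (q * n + i) (q * m + j) = (if j ≤ i then (1 : ℝ) else 0) * Wq q n m := by
  classical
  unfold Wq
  rw [if_congr (wq_split_iff hq hi hj n m) rfl rfl]
  by_cases hji : j ≤ i <;> by_cases hw : ∀ r : ℕ, 1 ≤ r → m % q ^ r ≤ n % q ^ r <;>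
    simp [hji, hw]

lemma wq_zero_s8 (N : ℕ) : Wq q N 0 = 1 := by
  unfold Wq
  rw [if_pos]
  intro r _
  simp

lemma wq_small {i j : ℕ} (hi : i < q) (hj : j < q) :
    Wq q i j = if j ≤ i then (1 : ℝ) else 0 := by
  have hmod : ∀ k : ℕ, k < q → ∀ r : ℕ, 1 ≤ r → k % q ^ r = k := by
    intro k hk r hr
    exact Nat.mod_eq_of_lt (lt_of_lt_of_le hk (Nat.le_self_pow (by omega) q))
  unfold Wq
  by_cases hji : j ≤ i
  · rw [if_pos, if_pos hji]
    intro r hr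
    rw [hmod j hj r hr, hmod i hi r hr]
    exact hji
  · rw [if_neg, if_neg hji]
    intro h
    have := h 1 le_rfl
    rw [hmod j hj 1 le_rfl, hmod i hi 1 le_rfl] at this
    exact hji this

lemma conv_decomp (hq : 2 ≤ q) {i : ℕ} (hi : i < q) (n : ℕ) (g : ℕ → ℝ) :
    ∑ m ∈ range (q * n + i + 1), Wq q (q * n + i) m * g m
      = ∑ m' ∈ range (n + 1), ∑ j ∈ range (i + 1), Wq q n m' * g (q * m' + j) := by
  have hq0 : 0 < q := by omega
  have h1 : ∑ m ∈ range (q * n + i + 1), Wq q (q * n + i) m * g m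
      = ∑ m ∈ range (q * (n + 1)), Wq q (q * n + i) m * g m := by
    apply Finset.sum_subset
    · apply Finset.range_subset_range.mpr
      rw [Nat.mul_succ]
      omega
    · intro m hm hm'
      rw [Finset.mem_range, Nat.mul_succ] at hm
      rw [Finset.mem_range] at hm'
      set t := m - q * n with ht
      have hm2 : m = q * n + t := by omega
      have hti : i < t := by omega
      have htq : t < q := by omega
      have hW : Wq q (q * n + i) m = 0 := by
        unfold Wq
        rw [if_neg]
        intro h
        have h1 := h 1 le_rfl
        rw [hm2, pow_one, Nat.mul_add_mod, Nat.mul_add_mod, Nat.mod_eq_of_lt hi,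
          Nat.mod_eq_of_lt htq] at h1
        omega
      rw [hW, zero_mul]
  have h2 : ∑ m ∈ range (q * (n + 1)), Wq q (q * n + i) m * g m
      = ∑ p ∈ range (n + 1) ×ˢ range q,
          Wq q (q * n + i) (q * p.1 + p.2) * g (q * p.1 + p.2) := by
    apply Finset.sum_nbij' (i := fun m => (m / q, m % q)) (j := fun p => q * p.1 + p.2)
    · intro m hm
      rw [Finset.mem_range] at hm
      rw [Finset.mem_product, Finset.mem_range, Finset.mem_range]
      constructor
      · rw [Nat.div_lt_iff_lt_mul hq0, mul_comm]
        exact hm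
      · exact Nat.mod_lt _ hq0
    · intro p hp
      rw [Finset.mem_product, Finset.mem_range, Finset.mem_range] at hp
      rw [Finset.mem_range]
      calc q * p.1 + p.2 < q * p.1 + q := by omega
        _ = q * (p.1 + 1) := by ring
        _ ≤ q * (n + 1) := Nat.mul_le_mul_left _ (by omega)
    · intro m _
      exact Nat.div_add_mod m q
    · intro p hp
      rw [Finset.mem_product, Finset.mem_range, Finset.mem_range] at hp
      have := Nat.mul_add_div hq0 p.1 p.2
      have h2 := Nat.mul_add_mod q p.1 p.2
      rw [Nat.div_eq_of_lt hp.2] at this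
      rw [Nat.mod_eq_of_lt hp.2] at h2
      ext <;> simp [this, h2]
    · intro m _
      rw [Nat.div_add_mod m q]
  rw [h1, h2]
  simp only [Finset.sum_product]
  apply Finset.sum_congr rfl
  intro m' _
  have key : ∀ j ∈ range q, Wq q (q * n + i) (q * m' + j) * g (q * m' + j)
      = if j ≤ i then Wq q n m' * g (q * m' + j) else 0 := by
    intro j hj
    rw [Finset.mem_range] at hj
    rw [wq_split hq0 hi hj]
    split_ifs <;> ring
  rw [Finset.sum_congr rfl key]
  symm
  calc ∑ j ∈ range (i + 1), Wq q n m' * g (q * m' + j)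
      = ∑ j ∈ range (i + 1), if j ≤ i then Wq q n m' * g (q * m' + j) else 0 := by
        apply Finset.sum_congr rfl
        intro j hj
        rw [Finset.mem_range] at hj
        rw [if_pos (by omega)]
    _ = ∑ j ∈ range q, if j ≤ i then Wq q n m' * g (q * m' + j) else 0 := by
        apply Finset.sum_subset (Finset.range_subset_range.mpr (by omega))
        intro j _ hj
        rw [Finset.mem_range] at hj
        rw [if_neg (by omega)]

end Aux

/-- The `P_{[0,q]}`-convolution of `q`-fractal series is `q`-fractal, its first `q`
coefficients are given by ordinary convolution, and the `∘`-inverse of a `q`-fractal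
series is `q`-fractal: the `q`-fractal series form a group under the
`P_{[0,q]}`-convolution determined by their first `q` coefficients. -/
theorem stmt8 (q : ℕ) (hq : 2 ≤ q) (a b : PowerSeries ℝ)
    (ha : IsFractal q a) (hb : IsFractal q b) :
    IsFractal q (conv (Wq q) a b) ∧
    (∀ n : ℕ, n < q →
      coeff n (conv (Wq q) a b) = ∑ m ∈ Finset.range (n + 1), coeff m a * coeff (n - m) b) ∧
    (∀ A : PowerSeries ℝ, conv (Wq q) a A = 1 → IsFractal q A) := by
  have hq0 : 0 < q := by omega
  have coeff_conv : ∀ (A B : PowerSeries ℝ) (k : ℕ),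
      coeff k (conv (Wq q) A B)
        = ∑ m ∈ Finset.range (k + 1), Wq q k m * coeff m A * coeff (k - m) B := by
    intro A B k
    simp [conv]
  -- Part 2
  have part2 : ∀ n : ℕ, n < q →
      coeff n (conv (Wq q) a b) = ∑ m ∈ Finset.range (n + 1), coeff m a * coeff (n - m) b := by
    intro n hn
    rw [coeff_conv]
    apply Finset.sum_congr rfl
    intro m hm
    rw [Finset.mem_range] at hm
    rw [wq_small (q := q) hn (by omega), if_pos (by omega), one_mul]
  -- index arithmetic helper
  have idx : ∀ n m' i j : ℕ, m' ≤ n → j ≤ i →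
      q * n + i - (q * m' + j) = q * (n - m') + (i - j) := by
    intro n m' i j hm hj
    have e : q * (n - m') = q * n - q * m' := Nat.mul_sub q n m'
    have e2 : q * m' ≤ q * n := Nat.mul_le_mul_left q hm
    omega
  -- main fractal recursion for c = conv a b
  have main : ∀ n i : ℕ, i < q →
      coeff (q * n + i) (conv (Wq q) a b)
        = coeff n (conv (Wq q) a b) * ∑ j ∈ Finset.range (i + 1), coeff j a * coeff (i - j) b := by
    intro n i hi
    rw [coeff_conv]
    have step : ∑ m ∈ Finset.range (q * n + i + 1), Wq q (q * n + i) m * coeff m a * coeff (q * n + i - m) b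
        = ∑ m ∈ Finset.range (q * n + i + 1), Wq q (q * n + i) m * (coeff m a * coeff (q * n + i - m) b) := by
      apply Finset.sum_congr rfl
      intro m _
      ring
    rw [step, conv_decomp hq hi n (fun m => coeff m a * coeff (q * n + i - m) b)]
    have step2 : ∀ m' ∈ range (n + 1), ∀ j ∈ range (i + 1),
        Wq q n m' * (coeff (q * m' + j) a * coeff (q * n + i - (q * m' + j)) b)
          = (Wq q n m' * coeff m' a * coeff (n - m') b) * (coeff j a * coeff (i - j) b) := by
      intro m' hm' j hj
      rw [Finset.mem_range] at hm' hj
      rw [idx n m' i j (by omega) (by omega), ha.2 m' j (by omega),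
        hb.2 (n - m') (i - j) (by omega)]
      ring
    rw [Finset.sum_congr rfl (fun m' hm' => Finset.sum_congr rfl (fun j hj => step2 m' hm' j hj)),
      ← Finset.sum_mul_sum, coeff_conv]
  -- Part 1
  have part1 : IsFractal q (conv (Wq q) a b) := by
    constructor
    · rw [coeff_conv]
      simp [wq_zero_s8, ha.1, hb.1]
    · intro n i hi
      rw [main n i hi, part2 i hi]
  refine ⟨part1, part2, ?_⟩
  -- Part 3: inverses
  intro A hA
  have hA0 : coeff 0 A = 1 := by
    have h0 := congrArg (coeff 0) hA
    rw [coeff_conv] at h0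
    simpa [wq_zero_s8, ha.1] using h0
  refine ⟨hA0, ?_⟩
  have key : ∀ N : ℕ, ∀ n i : ℕ, i < q → q * n + i = N →
      coeff (q * n + i) A = coeff n A * coeff i A := by
    intro N
    induction N using Nat.strong_induction_on with
    | _ N IH =>
      intro n i hi hN
      rcases Nat.eq_zero_or_pos n with rfl | hn
      · simp [hA0]
      · have hNpos : 1 ≤ q * n + i := by
          have : q * 1 ≤ q * n := Nat.mul_le_mul_left q hn
          omega
        have hcoeff : coeff (q * n + i) (conv (Wq q) a A) = 0 := by
          rw [hA, PowerSeries.coeff_one, if_neg (by omega)]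
        rw [coeff_conv] at hcoeff
        have step : ∑ m ∈ Finset.range (q * n + i + 1), Wq q (q * n + i) m * coeff m a * coeff (q * n + i - m) A
            = ∑ m ∈ Finset.range (q * n + i + 1), Wq q (q * n + i) m * (coeff m a * coeff (q * n + i - m) A) := by
          apply Finset.sum_congr rfl
          intro m _
          ring
        rw [step, conv_decomp hq hi n (fun m => coeff m a * coeff (q * n + i - m) A)] at hcoeff
        have step2 : ∀ m' ∈ range (n + 1), ∀ j ∈ range (i + 1),
            Wq q n m' * (coeff (q * m' + j) a * coeff (q * n + i - (q * m' + j)) A)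
              = (Wq q n m' * coeff m' a * coeff (n - m') A) * (coeff j a * coeff (i - j) A)
                + (if m' = 0 ∧ j = 0 then coeff (q * n + i) A - coeff n A * coeff i A else 0) := by
          intro m' hm' j hj
          rw [Finset.mem_range] at hm' hj
          by_cases h00 : m' = 0 ∧ j = 0
          · obtain ⟨rfl, rfl⟩ := h00
            rw [if_pos ⟨rfl, rfl⟩]
            simp only [Nat.mul_zero, Nat.add_zero, Nat.sub_zero, Nat.zero_add]
            rw [wq_zero_s8, ha.1]
            ring
          · rw [if_neg h00, add_zero]
            have hpos : 1 ≤ q * m' + j := by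
              rcases Nat.eq_zero_or_pos m' with rfl | hm0
              · simp only [Nat.mul_zero, Nat.zero_add]
                omega
              · have : q * 1 ≤ q * m' := Nat.mul_le_mul_left q hm0
                omega
            have hle : q * m' + j ≤ q * n + i := by
              have : q * m' ≤ q * n := Nat.mul_le_mul_left q (by omega)
              omega
            rw [idx n m' i j (by omega) (by omega)]
            have hlt : q * (n - m') + (i - j) < N := by
              have e : q * (n - m') = q * n - q * m' := Nat.mul_sub q n m'
              have e2 : q * m' ≤ q * n := Nat.mul_le_mul_left q (by omega)
              omega
            rw [IH _ hlt (n - m') (i - j) (by omega) rfl, ha.2 m' j (by omega)]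
            ring
        rw [Finset.sum_congr rfl (fun m' hm' => Finset.sum_congr rfl (fun j hj => step2 m' hm' j hj))] at hcoeff
        simp only [Finset.sum_add_distrib] at hcoeff
        rw [← Finset.sum_mul_sum] at hcoeff
        have hzero : coeff n (conv (Wq q) a A) = 0 := by
          rw [hA, PowerSeries.coeff_one, if_neg (by omega)]
        rw [coeff_conv] at hzero
        rw [hzero, zero_mul, zero_add] at hcoeff
        have h0m : ∀ m' ∈ range (n + 1),
            (∑ j ∈ range (i + 1), (if m' = 0 ∧ j = 0 then
              coeff (q * n + i) A - coeff n A * coeff i A else 0))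
            = if m' = 0 then coeff (q * n + i) A - coeff n A * coeff i A else 0 := by
          intro m' _
          rcases eq_or_ne m' 0 with rfl | hm0
          · simp
          · simp [hm0]
        rw [Finset.sum_congr rfl h0m] at hcoeff
        simp only [Finset.sum_ite_eq', Finset.mem_range] at hcoeff
        rw [if_pos (by omega)] at hcoeff
        linarith
  intro n i hi
  exact key (q * n + i) n i hi rfl
end
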